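/- arXiv:2401.07857 — 4 statements merged into one kernel-verified Lean document; each statement's English description precedes it below -/
import Mathlib

section
/- Let Φ1 be a state, let M be a move of type 1, 2 or 3 that is valid for Φ1, and suppose the type 2 move T2^i is valid for M(Φ1). Then T2^i is valid for Φ1, M is valid for T2^i(Φ1), and M(T2^i(Φ1)) = T2^i(M(Φ1)). -/
namespace CPaper


/-- The six types of moves on states (all indices 0-based). -/
inductive Move where
  | t1 (d : ℕ)
  | t2 (i : ℕ)
  | t3 (i j : ℕ)
  | t4 (i j : ℕ)
  | t5 (i j : ℕ)
  | t6 (i j : ℕ)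

/-- A state is a list of tuples of integers. -/
abbrev State := List (List ℤ)

/-- A genuine state: at least one tuple, and all tuples nonempty. -/
def IsState (Φ : State) : Prop := Φ ≠ [] ∧ ∀ t ∈ Φ, t ≠ []

/-- The entries of a state, read in order (flattened). -/
def entries (Φ : State) : List ℤ := Φ.flatten

/-- The number of positions of a state. -/
def numPos (Φ : State) : ℕ := (entries Φ).length

/-- The value at the (0-based) position `i` of the state `Φ`. -/
def entry (Φ : State) (i : ℕ) : ℤ := (entries Φ).getD i 0

/-- The (0-based) index of the tuple containing the flat position `i`. -/
def tupleIdx : State → ℕ → ℕ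
  | [], _ => 0
  | t :: ts, i => if i < t.length then 0 else tupleIdx ts (i - t.length) + 1

/-- Positions `i` and `j` lie in the same tuple of `Φ`. -/
def SameTuple (Φ : State) (i j : ℕ) : Prop := tupleIdx Φ i = tupleIdx Φ j

/-- Position `i` is dominant in `Φ`: its value bounds the absolute value of
every entry of the tuple containing it. -/
def DominantAt (Φ : State) (i : ℕ) : Prop :=
  ∀ k, k < numPos Φ → SameTuple Φ i k → |entry Φ k| ≤ entry Φ i

/-- Apply `f` at flat position `i`, preserving the tuple structure. -/
def modifyFlat (f : ℤ → ℤ) : ℕ → State → State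
  | _, [] => []
  | i, t :: ts =>
    if i < t.length then (t.take i ++ f (t.getD i 0) :: t.drop (i + 1)) :: ts
    else t :: modifyFlat f (i - t.length) ts

/-- Concatenate the `d`-th and `(d+1)`-th tuples of `Φ` (0-based). -/
def joinAt (Φ : State) (d : ℕ) : State :=
  Φ.take d ++ (Φ.getD d [] ++ Φ.getD (d + 1) []) :: Φ.drop (d + 2)

/-- The action of a move on a state. -/
def Move.apply : Move → State → State
  | .t1 d, Φ => joinAt Φ d
  | .t2 i, Φ => modifyFlat (· + 1) i Φ
  | .t3 i j, Φ => modifyFlat (· - 1) j (modifyFlat (· + 1) i Φ)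
  | .t4 i j, Φ => modifyFlat (· - 1) j (modifyFlat (· + 1) i Φ)
  | .t5 i j, Φ => modifyFlat (· + 1) j (modifyFlat (· + 1) i Φ)
  | .t6 i j, Φ => modifyFlat (· + 1) j (modifyFlat (· + 1) i Φ)

/-- A move is admissible for `Φ` when its indices are within bounds. -/
def Move.Admissible : Move → State → Prop
  | .t1 d, Φ => d + 1 < Φ.length
  | .t2 i, Φ => i < numPos Φ
  | .t3 i j, Φ => i < numPos Φ ∧ j < numPos Φ ∧ i ≠ j
  | .t4 i j, Φ => i < numPos Φ ∧ j < numPos Φ ∧ i ≠ j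
  | .t5 i j, Φ => i < numPos Φ ∧ j < numPos Φ ∧ i ≠ j
  | .t6 i j, Φ => i < numPos Φ ∧ j < numPos Φ ∧ i ≠ j

/-- Validity of a move for a state. -/
def Move.Valid : Move → State → Prop
  | .t1 d, Φ => d + 1 < Φ.length
  | .t2 i, Φ => i < numPos Φ ∧ DominantAt Φ i
  | .t3 i j, Φ =>
      i < numPos Φ ∧ j < numPos Φ ∧ i ≠ j ∧ SameTuple Φ i j ∧ DominantAt Φ i ∧ entry Φ j ≤ 0
  | .t4 i j, Φ =>
      i < numPos Φ ∧ j < numPos Φ ∧ i ≠ j ∧ SameTuple Φ i j ∧ DominantAt Φ i ∧ 0 < entry Φ j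
  | .t5 i j, Φ =>
      i < numPos Φ ∧ j < numPos Φ ∧ i ≠ j ∧ SameTuple Φ i j ∧ DominantAt Φ i ∧ entry Φ j < 0
  | .t6 i j, Φ =>
      i < numPos Φ ∧ j < numPos Φ ∧ i ≠ j ∧ SameTuple Φ i j ∧ DominantAt Φ i ∧ 0 ≤ entry Φ j

def Move.isType1 : Move → Prop
  | .t1 _ => True
  | _ => False

def Move.isType2 : Move → Prop
  | .t2 _ => True
  | _ => False

def Move.isType3 : Move → Prop
  | .t3 _ _ => True
  | _ => False

/-- The move is of one of the types 1, 2 or 3. -/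
def Move.isType123 : Move → Prop
  | .t1 _ => True
  | .t2 _ => True
  | .t3 _ _ => True
  | _ => False

/-- `ValidSeq ms Φ Ψ`: the list of moves `ms`, applied in order starting from `Φ`,
consists of valid moves and ends at `Ψ`. -/
def ValidSeq : List Move → State → State → Prop
  | [], Φ, Ψ => Φ = Ψ
  | m :: ms, Φ, Ψ => m.Valid Φ ∧ ValidSeq ms (m.apply Φ) Ψ

/-- A tuple of integers is C*_{Z,6}-realizable: the one-tuple state `[l]` is reachable
from `((0),...,(0))` by a finite sequence of valid moves of types 1–6. -/
def CStarZ6 (l : List ℤ) : Prop :=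
  ∃ ms : List Move, ValidSeq ms (List.replicate l.length ([0] : List ℤ)) [l]

/-- A tuple of integers is C*_{Z,3}-realizable: the one-tuple state `[l]` is reachable
from `((0),...,(0))` by a finite sequence of valid moves of types 1, 2 and 3. -/
def CStarZ3 (l : List ℤ) : Prop :=
  ∃ ms : List Move, (∀ m ∈ ms, m.isType123) ∧
    ValidSeq ms (List.replicate l.length ([0] : List ℤ)) [l]



section Aux

lemma getD_set_self (l : List ℤ) {i : ℕ} (a : ℤ) (h : i < l.length) :
    (l.set i a).getD i 0 = a := by
  simp [List.getD_eq_getElem?_getD, List.getElem?_set, h]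

lemma getD_set_ne (l : List ℤ) {i k : ℕ} (a : ℤ) (h : i ≠ k) :
    (l.set i a).getD k 0 = l.getD k 0 := by
  simp [List.getD_eq_getElem?_getD, List.getElem?_set, h]

variable (f g : ℤ → ℤ)

lemma modifyFlat_cons_lt {t : List ℤ} {ts : State} {i : ℕ} (h : i < t.length) :
    modifyFlat f i (t :: ts) = t.set i (f (t.getD i 0)) :: ts := by
  rw [List.set_eq_take_cons_drop _ h]
  simp [modifyFlat, h]

lemma modifyFlat_cons_ge {t : List ℤ} {ts : State} {i : ℕ} (h : ¬ i < t.length) :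
    modifyFlat f i (t :: ts) = t :: modifyFlat f (i - t.length) ts := by
  simp [modifyFlat, h]

lemma length_modifyFlat (Φ : State) (i : ℕ) : (modifyFlat f i Φ).length = Φ.length := by
  induction Φ generalizing i with
  | nil => rfl
  | cons t ts ih =>
    by_cases h : i < t.length
    · rw [modifyFlat_cons_lt f h]; simp
    · rw [modifyFlat_cons_ge f h]; simp [ih]

lemma entries_cons (t : List ℤ) (ts : State) : entries (t :: ts) = t ++ entries ts := by
  simp [entries]

lemma numPos_cons (t : List ℤ) (ts : State) : numPos (t :: ts) = t.length + numPos ts := by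
  simp [numPos, entries]

lemma entry_cons_lt {t : List ℤ} (ts : State) {i : ℕ} (h : i < t.length) :
    entry (t :: ts) i = t.getD i 0 := by
  rw [entry, entries_cons, List.getD_append _ _ _ _ h]

lemma entry_cons_ge {t : List ℤ} (ts : State) {i : ℕ} (h : t.length ≤ i) :
    entry (t :: ts) i = entry ts (i - t.length) := by
  rw [entry, entries_cons, List.getD_append_right _ _ _ _ h]; rfl

lemma entries_modifyFlat (Φ : State) {i : ℕ} (h : i < numPos Φ) :
    entries (modifyFlat f i Φ) = (entries Φ).set i (f (entry Φ i)) := by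
  induction Φ generalizing i with
  | nil => simp [numPos, entries] at h
  | cons t ts ih =>
    by_cases hi : i < t.length
    · rw [modifyFlat_cons_lt f hi, entries_cons, entries_cons, List.set_append,
        if_pos hi, entry_cons_lt ts hi]
    · have hi' : t.length ≤ i := by omega
      have h2 : i - t.length < numPos ts := by
        rw [numPos_cons] at h; omega
      rw [modifyFlat_cons_ge f hi, entries_cons, entries_cons, List.set_append,
        if_neg hi, entry_cons_ge ts hi', ih h2]

lemma modifyFlat_of_ge (Φ : State) {i : ℕ} (h : numPos Φ ≤ i) :
    modifyFlat f i Φ = Φ := by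
  induction Φ generalizing i with
  | nil => rfl
  | cons t ts ih =>
    rw [numPos_cons] at h
    have hi : ¬ i < t.length := by omega
    rw [modifyFlat_cons_ge f hi, ih (by omega)]

lemma numPos_modifyFlat (Φ : State) (i : ℕ) : numPos (modifyFlat f i Φ) = numPos Φ := by
  by_cases h : i < numPos Φ
  · rw [numPos, entries_modifyFlat f Φ h, List.length_set]; rfl
  · rw [modifyFlat_of_ge f Φ (by omega)]

lemma entry_modifyFlat_self (Φ : State) {i : ℕ} (h : i < numPos Φ) :
    entry (modifyFlat f i Φ) i = f (entry Φ i) := by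
  rw [entry, entries_modifyFlat f Φ h, getD_set_self _ _ h]

lemma entry_modifyFlat_ne (Φ : State) {i k : ℕ} (h : i ≠ k) :
    entry (modifyFlat f i Φ) k = entry Φ k := by
  by_cases hi : i < numPos Φ
  · rw [entry, entries_modifyFlat f Φ hi, getD_set_ne _ _ h]; rfl
  · rw [modifyFlat_of_ge f Φ (by omega)]

lemma tupleIdx_modifyFlat (Φ : State) (i k : ℕ) :
    tupleIdx (modifyFlat f i Φ) k = tupleIdx Φ k := by
  induction Φ generalizing i k with
  | nil => rfl
  | cons t ts ih =>
    by_cases hi : i < t.length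
    · rw [modifyFlat_cons_lt f hi]
      simp [tupleIdx, List.length_set]
    · rw [modifyFlat_cons_ge f hi]
      simp [tupleIdx, ih]

lemma sameTuple_modifyFlat (Φ : State) (i j k : ℕ) :
    SameTuple (modifyFlat f i Φ) j k ↔ SameTuple Φ j k := by
  simp [SameTuple, tupleIdx_modifyFlat]

lemma modifyFlat_comm (Φ : State) {i j : ℕ} (hne : i ≠ j) :
    modifyFlat f i (modifyFlat g j Φ) = modifyFlat g j (modifyFlat f i Φ) := by
  induction Φ generalizing i j with
  | nil => rfl
  | cons t ts ih =>
    by_cases hi : i < t.length <;> by_cases hj : j < t.length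
    · rw [modifyFlat_cons_lt g hj,
        modifyFlat_cons_lt f (by simpa using hi),
        modifyFlat_cons_lt f hi,
        modifyFlat_cons_lt g (by simpa using hj),
        getD_set_ne _ _ (Ne.symm hne), getD_set_ne _ _ hne,
        List.set_comm _ _ (Ne.symm hne)]
    · rw [modifyFlat_cons_ge g hj,
        modifyFlat_cons_lt f hi,
        modifyFlat_cons_lt f hi,
        modifyFlat_cons_ge g (by simpa using hj),
        List.length_set]
    · rw [modifyFlat_cons_lt g hj,
        modifyFlat_cons_ge f (by simpa using hi),
        modifyFlat_cons_ge f hi,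
        modifyFlat_cons_lt g hj,
        List.length_set]
    · rw [modifyFlat_cons_ge g hj,
        modifyFlat_cons_ge f hi,
        modifyFlat_cons_ge f hi,
        modifyFlat_cons_ge g hj,
        ih (by omega)]

lemma joinAt_zero_cons₂ (t u : List ℤ) (ts : State) :
    joinAt (t :: u :: ts) 0 = (t ++ u) :: ts := by
  simp [joinAt]

lemma joinAt_cons_succ (t : List ℤ) (ts : State) (d : ℕ) :
    joinAt (t :: ts) (d + 1) = t :: joinAt ts d := by
  simp [joinAt, List.getD]

lemma entries_joinAt (Φ : State) {d : ℕ} (h : d + 1 < Φ.length) :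
    entries (joinAt Φ d) = entries Φ := by
  induction d generalizing Φ with
  | zero =>
    match Φ, h with
    | t :: u :: ts, _ =>
      rw [joinAt_zero_cons₂]
      simp [entries, List.append_assoc]
  | succ d ih =>
    match Φ, h with
    | t :: ts, h =>
      rw [joinAt_cons_succ, entries_cons, entries_cons, ih ts (by simpa using h)]

lemma numPos_joinAt (Φ : State) {d : ℕ} (h : d + 1 < Φ.length) :
    numPos (joinAt Φ d) = numPos Φ := by
  rw [numPos, entries_joinAt Φ h]; rfl

lemma entry_joinAt (Φ : State) {d : ℕ} (h : d + 1 < Φ.length) (k : ℕ) :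
    entry (joinAt Φ d) k = entry Φ k := by
  rw [entry, entries_joinAt Φ h]; rfl

lemma tupleIdx_joinAt (Φ : State) {d : ℕ} (h : d + 1 < Φ.length) (k : ℕ) :
    tupleIdx (joinAt Φ d) k =
      if tupleIdx Φ k ≤ d then tupleIdx Φ k else tupleIdx Φ k - 1 := by
  induction d generalizing Φ k with
  | zero =>
    match Φ, h with
    | t :: u :: ts, _ =>
      rw [joinAt_zero_cons₂]
      simp only [tupleIdx, List.length_append]
      by_cases h1 : k < t.length
      · simp [h1, show k < t.length + u.length from by omega]
      · by_cases h2 : k - t.length < u.length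
        · simp [h1, h2, show k < t.length + u.length from by omega]
        · have h3 : ¬ k < t.length + u.length := by omega
          have h4 : k - (t.length + u.length) = k - t.length - u.length := by omega
          simp [h1, h2, h3, h4]
  | succ d ih =>
    match Φ, h with
    | t :: ts, h =>
      rw [joinAt_cons_succ]
      simp only [tupleIdx]
      by_cases h1 : k < t.length
      · simp [h1]
      · rw [if_neg h1]; simp only [if_neg h1]; rw [ih ts (by simpa using h) (k - t.length)]
        split_ifs <;> omega

lemma sameTuple_joinAt (Φ : State) {d : ℕ} (h : d + 1 < Φ.length) {i k : ℕ}
    (hst : SameTuple Φ i k) : SameTuple (joinAt Φ d) i k := by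
  unfold SameTuple at *
  rw [tupleIdx_joinAt Φ h, tupleIdx_joinAt Φ h, hst]

lemma joinAt_modifyFlat (Φ : State) (i : ℕ) {d : ℕ} (h : d + 1 < Φ.length) :
    joinAt (modifyFlat f i Φ) d = modifyFlat f i (joinAt Φ d) := by
  induction d generalizing Φ i with
  | zero =>
    match Φ, h with
    | t :: u :: ts, _ =>
      rw [joinAt_zero_cons₂]
      by_cases h1 : i < t.length
      · rw [modifyFlat_cons_lt f h1, joinAt_zero_cons₂,
          modifyFlat_cons_lt f (show i < (t ++ u).length by simp; omega),
          List.set_append, if_pos h1, List.getD_append _ _ _ _ h1]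
      · rw [modifyFlat_cons_ge f h1]
        by_cases h2 : i - t.length < u.length
        · rw [modifyFlat_cons_lt f h2, joinAt_zero_cons₂,
            modifyFlat_cons_lt f (show i < (t ++ u).length by simp; omega),
            List.set_append, if_neg h1,
            List.getD_append_right _ _ _ _ (by omega)]
        · rw [modifyFlat_cons_ge f h2, joinAt_zero_cons₂,
            modifyFlat_cons_ge f (show ¬ i < (t ++ u).length by simp; omega)]
          congr 2
          simp; omega
  | succ d ih =>
    match Φ, h with
    | t :: ts, h =>
      rw [joinAt_cons_succ]
      by_cases h1 : i < t.length
      · rw [modifyFlat_cons_lt f h1, modifyFlat_cons_lt f h1, joinAt_cons_succ]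
      · rw [modifyFlat_cons_ge f h1, modifyFlat_cons_ge f h1, joinAt_cons_succ,
          ih ts (i - t.length) (by simpa using h)]

end Aux

/-- A valid move of type 1, 2 or 3 followed by a valid type 2 move can be swapped:
both moves stay valid and the final state is unchanged. -/
theorem swap_valid_T2 (Φ : State) (hΦ : IsState Φ) (M : Move) (hM : M.isType123)
    (i : ℕ) (hMval : M.Valid Φ) (hT2 : (Move.t2 i).Valid (M.apply Φ)) :
    (Move.t2 i).Valid Φ ∧ M.Valid ((Move.t2 i).apply Φ) ∧
      M.apply ((Move.t2 i).apply Φ) = (Move.t2 i).apply (M.apply Φ) := by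
  have stR : ∀ (Ψ : State) (x : ℕ), SameTuple Ψ x x := fun _ _ => rfl
  cases M with
  | t4 a b => exact hM.elim
  | t5 a b => exact hM.elim
  | t6 a b => exact hM.elim
  | t1 d =>
    simp only [Move.Valid, Move.apply] at hMval hT2 ⊢
    obtain ⟨hi, hdom⟩ := hT2
    rw [numPos_joinAt Φ hMval] at hi
    refine ⟨⟨hi, ?_⟩, ?_, ?_⟩
    · intro k hk hst
      have h := hdom k (by rwa [numPos_joinAt Φ hMval]) (sameTuple_joinAt Φ hMval hst)
      rwa [entry_joinAt Φ hMval, entry_joinAt Φ hMval] at h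
    · rwa [length_modifyFlat]
    · exact joinAt_modifyFlat _ Φ i hMval
  | t2 j =>
    simp only [Move.Valid, Move.apply] at hMval hT2 ⊢
    obtain ⟨hj, hdomj⟩ := hMval
    obtain ⟨hi, hdomi⟩ := hT2
    rw [numPos_modifyFlat] at hi
    have hj0 : 0 ≤ entry Φ j := (abs_nonneg _).trans (hdomj j hj (stR Φ j))
    by_cases hij : i = j
    · subst hij
      refine ⟨⟨hi, hdomj⟩, ⟨by rwa [numPos_modifyFlat], ?_⟩, rfl⟩
      intro k hk hst
      rw [numPos_modifyFlat] at hk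
      rw [sameTuple_modifyFlat] at hst
      rw [entry_modifyFlat_self _ Φ hi]
      by_cases hk' : k = i
      · subst hk'
        rw [entry_modifyFlat_self _ Φ hi, abs_of_nonneg (by omega)]
      · rw [entry_modifyFlat_ne _ Φ (fun h => hk' h.symm)]
        have := hdomj k hk hst
        omega
    · by_cases hsij : SameTuple Φ i j
      · exfalso
        have h1 := hdomi j (by rwa [numPos_modifyFlat]) ((sameTuple_modifyFlat _ Φ j i j).mpr hsij)
        rw [entry_modifyFlat_self _ Φ hj, entry_modifyFlat_ne _ Φ (fun h => hij h.symm)] at h1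
        have h2 := hdomj i hi (Eq.symm hsij)
        rw [abs_of_nonneg (by omega)] at h1
        have h3 := le_abs_self (entry Φ i)
        omega
      · refine ⟨⟨hi, ?_⟩, ⟨by rwa [numPos_modifyFlat], ?_⟩, modifyFlat_comm _ _ Φ (fun h => hij h.symm)⟩
        · intro k hk hst
          have hkj : k ≠ j := fun h => hsij (h ▸ hst)
          have h := hdomi k (by rwa [numPos_modifyFlat]) ((sameTuple_modifyFlat _ Φ j i k).mpr hst)
          rwa [entry_modifyFlat_ne _ Φ (fun h => hkj h.symm),
            entry_modifyFlat_ne _ Φ (fun h => hij h.symm)] at h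
        · intro k hk hst
          rw [numPos_modifyFlat] at hk
          rw [sameTuple_modifyFlat] at hst
          have hki : k ≠ i := fun h => hsij (Eq.symm (h ▸ hst))
          rw [entry_modifyFlat_ne _ Φ (fun h => hki h.symm), entry_modifyFlat_ne _ Φ hij]
          exact hdomj k hk hst
  | t3 a b =>
    simp only [Move.Valid, Move.apply] at hMval hT2 ⊢
    obtain ⟨ha, hb, hab, habst, hdoma, hb0⟩ := hMval
    obtain ⟨hi, hdomi⟩ := hT2
    rw [numPos_modifyFlat, numPos_modifyFlat] at hi
    have ha0 : 0 ≤ entry Φ a := (abs_nonneg _).trans (hdoma a ha (stR Φ a))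
    set Ψ := modifyFlat (· - 1) b (modifyFlat (· + 1) a Φ) with hΨ
    have hnΨ : numPos Ψ = numPos Φ := by rw [hΨ, numPos_modifyFlat, numPos_modifyFlat]
    have hstΨ : ∀ x y, SameTuple Ψ x y ↔ SameTuple Φ x y := by
      intro x y
      rw [hΨ, sameTuple_modifyFlat, sameTuple_modifyFlat]
    have ea : entry Ψ a = entry Φ a + 1 := by
      rw [hΨ, entry_modifyFlat_ne _ _ (fun h => hab h.symm),
        entry_modifyFlat_self _ Φ ha]
    have eb : entry Ψ b = entry Φ b - 1 := by
      rw [hΨ, entry_modifyFlat_self _ _ (by rwa [numPos_modifyFlat]),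
        entry_modifyFlat_ne _ Φ hab]
    have eo : ∀ m, m ≠ a → m ≠ b → entry Ψ m = entry Φ m := by
      intro m hma hmb
      rw [hΨ, entry_modifyFlat_ne _ _ (fun h => hmb h.symm),
        entry_modifyFlat_ne _ Φ (fun h => hma h.symm)]
    by_cases hia : i = a
    · subst hia
      refine ⟨⟨hi, hdoma⟩, ⟨?_, ?_, hab, ?_, ?_, ?_⟩, ?_⟩
      · rwa [numPos_modifyFlat]
      · rwa [numPos_modifyFlat]
      · rwa [sameTuple_modifyFlat]
      · intro m hm hst
        rw [numPos_modifyFlat] at hm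
        rw [sameTuple_modifyFlat] at hst
        rw [entry_modifyFlat_self _ Φ hi]
        by_cases hm' : m = i
        · subst hm'
          rw [entry_modifyFlat_self _ Φ hi, abs_of_nonneg (by omega)]
        · rw [entry_modifyFlat_ne _ Φ (fun h => hm' h.symm)]
          have := hdoma m hm hst
          omega
      · rw [entry_modifyFlat_ne _ Φ hab]
        exact hb0
      · exact modifyFlat_comm _ _ _ (fun h => hab h.symm)
    · by_cases hib : i = b
      · exfalso
        subst hib
        have h1 := hdomi a (by rwa [hnΨ]) ((hstΨ i a).mpr (Eq.symm habst))
        rw [ea, eb, abs_of_nonneg (by omega)] at h1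
        omega
      · by_cases hsia : SameTuple Φ i a
        · exfalso
          have h1 := hdomi a (by rwa [hnΨ]) ((hstΨ i a).mpr hsia)
          rw [ea, eo i hia hib, abs_of_nonneg (by omega)] at h1
          have h2 := hdoma i hi (Eq.symm hsia)
          have h3 := le_abs_self (entry Φ i)
          omega
        · have hsib : ¬ SameTuple Φ i b := fun h => hsia (h.trans (Eq.symm habst))
          refine ⟨⟨hi, ?_⟩, ⟨?_, ?_, hab, ?_, ?_, ?_⟩, ?_⟩
          · intro m hm hst
            have hma : m ≠ a := fun h => hsia (h ▸ hst)
            have hmb : m ≠ b := fun h => hsib (h ▸ hst)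
            have h := hdomi m (by rwa [hnΨ]) ((hstΨ i m).mpr hst)
            rwa [eo m hma hmb, eo i hia hib] at h
          · rwa [numPos_modifyFlat]
          · rwa [numPos_modifyFlat]
          · rwa [sameTuple_modifyFlat]
          · intro m hm hst
            rw [numPos_modifyFlat] at hm
            rw [sameTuple_modifyFlat] at hst
            have hmi : m ≠ i := fun h => hsia (Eq.symm (h ▸ hst))
            rw [entry_modifyFlat_ne _ Φ (fun h => hmi h.symm),
              entry_modifyFlat_ne _ Φ hia]
            exact hdoma m hm hst
          · rw [entry_modifyFlat_ne _ Φ hib]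
            exact hb0
          · rw [modifyFlat_comm _ _ Φ (fun h => hia h.symm),
              modifyFlat_comm _ _ (modifyFlat (· + 1) a Φ) (fun h => hib h.symm)]


end CPaper
end

section
/- If a multiset {r1,...,rn} of rational numbers is C_{Q,3}-realizable, then there exists a positive integer q such that the multiset {q·r1,...,q·rn} consists of integers and is C_{Z,3}-realizable. -/
namespace CPaper


/-- One step of the C_{Q,3} rewriting procedure on collections of multisets of rationals. -/
inductive StepQ3 : Multiset (Multiset ℚ) → Multiset (Multiset ℚ) → Prop where
  | join (A B : Multiset ℚ) (C : Multiset (Multiset ℚ)) :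
      StepQ3 (A ::ₘ B ::ₘ C) ((A + B) ::ₘ C)
  | rule2 (a ε : ℚ) (s : Multiset ℚ) (C : Multiset (Multiset ℚ))
      (hdom : ∀ b ∈ a ::ₘ s, |b| ≤ a) (hε : 0 < ε) :
      StepQ3 ((a ::ₘ s) ::ₘ C) (((a + ε) ::ₘ s) ::ₘ C)
  | rule3 (a b ε : ℚ) (s : Multiset ℚ) (C : Multiset (Multiset ℚ))
      (hdom : ∀ c ∈ a ::ₘ b ::ₘ s, |c| ≤ a) (hb : b ≤ 0) (hε : 0 < ε) :
      StepQ3 ((a ::ₘ b ::ₘ s) ::ₘ C) (((a + ε) ::ₘ (b - ε) ::ₘ s) ::ₘ C)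

/-- A multiset of rationals is C_{Q,3}-realizable. -/
def CQ3Realizable (Λ : Multiset ℚ) : Prop :=
  ∃ n : ℕ, Relation.ReflTransGen StepQ3 (Multiset.replicate n ({0} : Multiset ℚ)) {Λ}


/-- One step of the C_{Z,6} rewriting procedure on collections of multisets of integers. -/
inductive StepZ6 : Multiset (Multiset ℤ) → Multiset (Multiset ℤ) → Prop where
  | join (A B : Multiset ℤ) (C : Multiset (Multiset ℤ)) :
      StepZ6 (A ::ₘ B ::ₘ C) ((A + B) ::ₘ C)
  | rule2 (a : ℤ) (s : Multiset ℤ) (C : Multiset (Multiset ℤ))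
      (hdom : ∀ b ∈ a ::ₘ s, |b| ≤ a) :
      StepZ6 ((a ::ₘ s) ::ₘ C) (((a + 1) ::ₘ s) ::ₘ C)
  | rule3 (a b : ℤ) (s : Multiset ℤ) (C : Multiset (Multiset ℤ))
      (hdom : ∀ c ∈ a ::ₘ b ::ₘ s, |c| ≤ a) (hb : b ≤ 0) :
      StepZ6 ((a ::ₘ b ::ₘ s) ::ₘ C) (((a + 1) ::ₘ (b - 1) ::ₘ s) ::ₘ C)
  | rule4 (a b : ℤ) (s : Multiset ℤ) (C : Multiset (Multiset ℤ))
      (hdom : ∀ c ∈ a ::ₘ b ::ₘ s, |c| ≤ a) (hb : 0 < b) :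
      StepZ6 ((a ::ₘ b ::ₘ s) ::ₘ C) (((a + 1) ::ₘ (b - 1) ::ₘ s) ::ₘ C)
  | rule5 (a b : ℤ) (s : Multiset ℤ) (C : Multiset (Multiset ℤ))
      (hdom : ∀ c ∈ a ::ₘ b ::ₘ s, |c| ≤ a) (hb : b < 0) :
      StepZ6 ((a ::ₘ b ::ₘ s) ::ₘ C) (((a + 1) ::ₘ (b + 1) ::ₘ s) ::ₘ C)
  | rule6 (a b : ℤ) (s : Multiset ℤ) (C : Multiset (Multiset ℤ))
      (hdom : ∀ c ∈ a ::ₘ b ::ₘ s, |c| ≤ a) (hb : 0 ≤ b) :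
      StepZ6 ((a ::ₘ b ::ₘ s) ::ₘ C) (((a + 1) ::ₘ (b + 1) ::ₘ s) ::ₘ C)

/-- One step of the C_{Z,3} rewriting procedure (only rules (i)–(iii)). -/
inductive StepZ3 : Multiset (Multiset ℤ) → Multiset (Multiset ℤ) → Prop where
  | join (A B : Multiset ℤ) (C : Multiset (Multiset ℤ)) :
      StepZ3 (A ::ₘ B ::ₘ C) ((A + B) ::ₘ C)
  | rule2 (a : ℤ) (s : Multiset ℤ) (C : Multiset (Multiset ℤ))
      (hdom : ∀ b ∈ a ::ₘ s, |b| ≤ a) :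
      StepZ3 ((a ::ₘ s) ::ₘ C) (((a + 1) ::ₘ s) ::ₘ C)
  | rule3 (a b : ℤ) (s : Multiset ℤ) (C : Multiset (Multiset ℤ))
      (hdom : ∀ c ∈ a ::ₘ b ::ₘ s, |c| ≤ a) (hb : b ≤ 0) :
      StepZ3 ((a ::ₘ b ::ₘ s) ::ₘ C) (((a + 1) ::ₘ (b - 1) ::ₘ s) ::ₘ C)

/-- A multiset of integers is C_{Z,6}-realizable. -/
def CZ6Realizable (Λ : Multiset ℤ) : Prop :=
  ∃ n : ℕ, Relation.ReflTransGen StepZ6 (Multiset.replicate n ({0} : Multiset ℤ)) {Λ}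

/-- A multiset of integers is C_{Z,3}-realizable. -/
def CZ3Realizable (Λ : Multiset ℤ) : Prop :=
  ∃ n : ℕ, Relation.ReflTransGen StepZ3 (Multiset.replicate n ({0} : Multiset ℤ)) {Λ}



section Transfer

def AllInt (e : ℤ) (S : Multiset ℚ) : Prop := ∀ r ∈ S, ((e : ℚ) * r).den = 1

def zify (e : ℤ) (S : Multiset ℚ) : Multiset ℤ := S.map (fun r => ((e : ℚ) * r).num)

def Zify (e : ℤ) (X : Multiset (Multiset ℚ)) : Multiset (Multiset ℤ) := X.map (zify e)

lemma den_add' {x y : ℚ} (hx : x.den = 1) (hy : y.den = 1) : (x + y).den = 1 := by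
  rw [← Rat.coe_int_num_of_den_eq_one hx, ← Rat.coe_int_num_of_den_eq_one hy, ← Int.cast_add]
  exact Rat.den_intCast _

lemma den_sub' {x y : ℚ} (hx : x.den = 1) (hy : y.den = 1) : (x - y).den = 1 := by
  rw [← Rat.coe_int_num_of_den_eq_one hx, ← Rat.coe_int_num_of_den_eq_one hy, ← Int.cast_sub]
  exact Rat.den_intCast _

lemma num_add' {x y : ℚ} (hx : x.den = 1) (hy : y.den = 1) : (x + y).num = x.num + y.num := by
  have h : (((x + y).num : ℚ)) = ((x.num + y.num : ℤ) : ℚ) := by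
    rw [Rat.coe_int_num_of_den_eq_one (den_add' hx hy)]
    push_cast
    rw [Rat.coe_int_num_of_den_eq_one hx, Rat.coe_int_num_of_den_eq_one hy]
  exact_mod_cast h

lemma num_sub' {x y : ℚ} (hx : x.den = 1) (hy : y.den = 1) : (x - y).num = x.num - y.num := by
  have h : (((x - y).num : ℚ)) = ((x.num - y.num : ℤ) : ℚ) := by
    rw [Rat.coe_int_num_of_den_eq_one (den_sub' hx hy)]
    push_cast
    rw [Rat.coe_int_num_of_den_eq_one hx, Rat.coe_int_num_of_den_eq_one hy]
  exact_mod_cast h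

lemma den_mul_self' (ε : ℚ) : (ε.den : ℚ) * ε = (ε.num : ℚ) := by
  have h := Rat.num_div_den ε
  have hne : (ε.den : ℚ) ≠ 0 := Nat.cast_ne_zero.mpr ε.den_ne_zero
  rw [mul_comm]
  exact ((div_eq_iff hne).mp h).symm

lemma den_dvd_int' (ε : ℚ) (e : ℤ) (hd : (ε.den : ℤ) ∣ e) : ((e : ℚ) * ε).den = 1 := by
  obtain ⟨t, rfl⟩ := hd
  have key : (((ε.den : ℤ) * t : ℤ) : ℚ) * ε = ((ε.num * t : ℤ) : ℚ) := by
    push_cast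
    rw [mul_comm ((ε.den : ℚ)) (t : ℚ), mul_assoc, den_mul_self', mul_comm]
  rw [key]; exact Rat.den_intCast _

lemma zrule2 (a : ℤ) (s : Multiset ℤ) (C : Multiset (Multiset ℤ))
    (hdom : ∀ b ∈ a ::ₘ s, |b| ≤ a) (k : ℕ) :
    Relation.ReflTransGen StepZ3 ((a ::ₘ s) ::ₘ C) (((a + k) ::ₘ s) ::ₘ C) := by
  induction k with
  | zero => simpa using Relation.ReflTransGen.refl
  | succ m ih =>
    have ha : 0 ≤ a := le_trans (abs_nonneg a) (hdom a (Multiset.mem_cons_self a s))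
    have hdom' : ∀ b ∈ (a + (m : ℤ)) ::ₘ s, |b| ≤ a + (m : ℤ) := by
      intro b hb
      rw [abs_le]
      rcases Multiset.mem_cons.mp hb with rfl | hb
      · omega
      · have h := abs_le.mp (hdom b (Multiset.mem_cons_of_mem hb))
        omega
    have step := StepZ3.rule2 (a + (m : ℤ)) s C hdom'
    have heq : (a + ((m + 1 : ℕ) : ℤ)) = (a + (m : ℤ)) + 1 := by push_cast; ring
    rw [heq]
    exact ih.tail step

lemma zrule3 (a b : ℤ) (s : Multiset ℤ) (C : Multiset (Multiset ℤ))
    (hdom : ∀ c ∈ a ::ₘ b ::ₘ s, |c| ≤ a) (hb : b ≤ 0) (k : ℕ) :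
    Relation.ReflTransGen StepZ3 ((a ::ₘ b ::ₘ s) ::ₘ C)
      (((a + k) ::ₘ (b - k) ::ₘ s) ::ₘ C) := by
  induction k with
  | zero => simpa using Relation.ReflTransGen.refl
  | succ m ih =>
    have ha : 0 ≤ a := le_trans (abs_nonneg a) (hdom a (Multiset.mem_cons_self _ _))
    have hba : -b ≤ a := by
      have h := hdom b (Multiset.mem_cons_of_mem (Multiset.mem_cons_self _ _))
      rw [abs_of_nonpos hb] at h; exact h
    have hdom' : ∀ c ∈ (a + (m : ℤ)) ::ₘ (b - (m : ℤ)) ::ₘ s, |c| ≤ a + (m : ℤ) := by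
      intro c hc
      rw [abs_le]
      rcases Multiset.mem_cons.mp hc with rfl | hc
      · omega
      rcases Multiset.mem_cons.mp hc with rfl | hc
      · omega
      · have h := abs_le.mp (hdom c (Multiset.mem_cons_of_mem (Multiset.mem_cons_of_mem hc)))
        omega
    have step := StepZ3.rule3 (a + (m : ℤ)) (b - (m : ℤ)) s C hdom' (by omega)
    have h1 : (a + ((m + 1 : ℕ) : ℤ)) = (a + (m : ℤ)) + 1 := by push_cast; ring
    have h2 : (b - ((m + 1 : ℕ) : ℤ)) = (b - (m : ℤ)) - 1 := by push_cast; ring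
    rw [h1, h2]
    exact ih.tail step

lemma zify_cast {e : ℤ} {S : Multiset ℚ} (h : AllInt e S) :
    (zify e S).map (fun x : ℤ => (x : ℚ)) = S.map (fun r => (e : ℚ) * r) := by
  rw [zify, Multiset.map_map]
  exact Multiset.map_congr rfl fun r hr => Rat.coe_int_num_of_den_eq_one (h r hr)

lemma dom_transfer {e : ℤ} (he : 0 < e) {a : ℚ} {s : Multiset ℚ}
    (hdom : ∀ b ∈ a ::ₘ s, |b| ≤ a) (hInt : AllInt e (a ::ₘ s)) :
    ∀ b ∈ ((e : ℚ) * a).num ::ₘ zify e s, |b| ≤ ((e : ℚ) * a).num := by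
  have heQ : (0 : ℚ) < (e : ℚ) := by exact_mod_cast he
  have key : ∀ r ∈ a ::ₘ s, |((e : ℚ) * r).num| ≤ ((e : ℚ) * a).num := by
    intro r hr
    have h1 : |(e : ℚ) * r| ≤ (e : ℚ) * a := by
      rw [abs_mul, abs_of_pos heQ]
      exact mul_le_mul_of_nonneg_left (hdom r hr) heQ.le
    have hr' := Rat.coe_int_num_of_den_eq_one (hInt r hr)
    have ha' := Rat.coe_int_num_of_den_eq_one (hInt a (Multiset.mem_cons_self a s))
    rw [show (|(( e : ℚ) * r).num| ≤ ((e : ℚ) * a).num) ↔ ((|((e : ℚ) * r).num| : ℤ) : ℚ) ≤ ((((e : ℚ) * a).num : ℤ) : ℚ) from Int.cast_le.symm, Int.cast_abs, hr', ha']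
    exact h1
  intro b hb
  rcases Multiset.mem_cons.mp hb with rfl | hb
  · exact key a (Multiset.mem_cons_self a s)
  · obtain ⟨r, hrs, rfl⟩ := Multiset.mem_map.mp hb
    exact key r (Multiset.mem_cons_of_mem hrs)

lemma step_transfer {X Y : Multiset (Multiset ℚ)} (hXY : StepQ3 X Y) :
    ∃ d : ℤ, 0 < d ∧ ∀ e : ℤ, 0 < e → d ∣ e →
      (∀ S ∈ X, AllInt e S) →
      (∀ S ∈ Y, AllInt e S) ∧ Relation.ReflTransGen StepZ3 (Zify e X) (Zify e Y) := by
  cases hXY with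
  | join A B C =>
    refine ⟨1, one_pos, fun e he hd hX => ⟨?_, ?_⟩⟩
    · intro S hS
      rcases Multiset.mem_cons.mp hS with rfl | hS
      · intro r hr
        rcases Multiset.mem_add.mp hr with h | h
        · exact hX A (Multiset.mem_cons_self _ _) r h
        · exact hX B (Multiset.mem_cons_of_mem (Multiset.mem_cons_self _ _)) r h
      · exact hX S (Multiset.mem_cons_of_mem (Multiset.mem_cons_of_mem hS))
    · have h1 : Zify e (A ::ₘ B ::ₘ C) = zify e A ::ₘ zify e B ::ₘ Zify e C := by
        simp [Zify]
      have h2 : Zify e ((A + B) ::ₘ C) = (zify e A + zify e B) ::ₘ Zify e C := by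
        simp [Zify, zify]
      rw [h1, h2]
      exact Relation.ReflTransGen.single (StepZ3.join _ _ _)
  | rule2 a ε s C hdom hε =>
    refine ⟨(ε.den : ℤ), by exact_mod_cast ε.den_pos, fun e he hd hX => ?_⟩
    have heQ : (0 : ℚ) < (e : ℚ) := by exact_mod_cast he
    have hεd : ((e : ℚ) * ε).den = 1 := den_dvd_int' ε e hd
    have hIa : AllInt e (a ::ₘ s) := hX _ (Multiset.mem_cons_self _ _)
    have hY : ∀ S ∈ ((a + ε) ::ₘ s) ::ₘ C, AllInt e S := by
      intro S hS
      rcases Multiset.mem_cons.mp hS with rfl | hS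
      · intro r hr
        rcases Multiset.mem_cons.mp hr with rfl | hr
        · rw [mul_add]
          exact den_add' (hIa a (Multiset.mem_cons_self _ _)) hεd
        · exact hIa r (Multiset.mem_cons_of_mem hr)
      · exact hX S (Multiset.mem_cons_of_mem hS)
    refine ⟨hY, ?_⟩
    have hk0 : 0 < ((e : ℚ) * ε).num := Rat.num_pos.mpr (mul_pos heQ hε)
    set k : ℕ := ((e : ℚ) * ε).num.toNat with hk
    have hkk : ((e : ℚ) * ε).num = (k : ℤ) := (Int.toNat_of_nonneg hk0.le).symm
    have hnum : ((e : ℚ) * (a + ε)).num = ((e : ℚ) * a).num + (k : ℤ) := by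
      rw [mul_add, num_add' (hIa a (Multiset.mem_cons_self _ _)) hεd, hkk]
    have h1 : Zify e ((a ::ₘ s) ::ₘ C)
        = (((e : ℚ) * a).num ::ₘ zify e s) ::ₘ Zify e C := by
      simp [Zify, zify]
    have h2 : Zify e (((a + ε) ::ₘ s) ::ₘ C)
        = ((((e : ℚ) * a).num + (k : ℤ)) ::ₘ zify e s) ::ₘ Zify e C := by
      have : zify e ((a + ε) ::ₘ s) = ((e : ℚ) * (a + ε)).num ::ₘ zify e s := by
        simp [zify]
      simp only [Zify, Multiset.map_cons, this, hnum]
    rw [h1, h2]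
    exact zrule2 _ _ _ (dom_transfer he hdom hIa) k
  | rule3 a b ε s C hdom hb hε =>
    refine ⟨(ε.den : ℤ), by exact_mod_cast ε.den_pos, fun e he hd hX => ?_⟩
    have heQ : (0 : ℚ) < (e : ℚ) := by exact_mod_cast he
    have hεd : ((e : ℚ) * ε).den = 1 := den_dvd_int' ε e hd
    have hIa : AllInt e (a ::ₘ b ::ₘ s) := hX _ (Multiset.mem_cons_self _ _)
    have hIb : ((e : ℚ) * b).den = 1 :=
      hIa b (Multiset.mem_cons_of_mem (Multiset.mem_cons_self _ _))
    have hY : ∀ S ∈ ((a + ε) ::ₘ (b - ε) ::ₘ s) ::ₘ C, AllInt e S := by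
      intro S hS
      rcases Multiset.mem_cons.mp hS with rfl | hS
      · intro r hr
        rcases Multiset.mem_cons.mp hr with rfl | hr
        · rw [mul_add]
          exact den_add' (hIa a (Multiset.mem_cons_self _ _)) hεd
        rcases Multiset.mem_cons.mp hr with rfl | hr
        · rw [mul_sub]
          exact den_sub' hIb hεd
        · exact hIa r (Multiset.mem_cons_of_mem (Multiset.mem_cons_of_mem hr))
      · exact hX S (Multiset.mem_cons_of_mem hS)
    refine ⟨hY, ?_⟩
    have hk0 : 0 < ((e : ℚ) * ε).num := Rat.num_pos.mpr (mul_pos heQ hε)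
    set k : ℕ := ((e : ℚ) * ε).num.toNat with hk
    have hkk : ((e : ℚ) * ε).num = (k : ℤ) := (Int.toNat_of_nonneg hk0.le).symm
    have hnuma : ((e : ℚ) * (a + ε)).num = ((e : ℚ) * a).num + (k : ℤ) := by
      rw [mul_add, num_add' (hIa a (Multiset.mem_cons_self _ _)) hεd, hkk]
    have hnumb : ((e : ℚ) * (b - ε)).num = ((e : ℚ) * b).num - (k : ℤ) := by
      rw [mul_sub, num_sub' hIb hεd, hkk]
    have hbz : ((e : ℚ) * b).num ≤ 0 := by
      have : (e : ℚ) * b ≤ 0 := mul_nonpos_of_nonneg_of_nonpos heQ.le hb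
      exact Rat.num_nonpos.mpr this
    have hdomZ : ∀ c ∈ ((e : ℚ) * a).num ::ₘ ((e : ℚ) * b).num ::ₘ zify e s,
        |c| ≤ ((e : ℚ) * a).num := by
      have h := dom_transfer he hdom hIa
      have hz : zify e (b ::ₘ s) = ((e : ℚ) * b).num ::ₘ zify e s := by simp [zify]
      rwa [hz] at h
    have h1 : Zify e ((a ::ₘ b ::ₘ s) ::ₘ C)
        = (((e : ℚ) * a).num ::ₘ ((e : ℚ) * b).num ::ₘ zify e s) ::ₘ Zify e C := by
      simp [Zify, zify]
    have h2 : Zify e (((a + ε) ::ₘ (b - ε) ::ₘ s) ::ₘ C)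
        = ((((e : ℚ) * a).num + (k : ℤ)) ::ₘ (((e : ℚ) * b).num - (k : ℤ))
            ::ₘ zify e s) ::ₘ Zify e C := by
      have ha' : zify e ((a + ε) ::ₘ (b - ε) ::ₘ s)
          = ((e : ℚ) * (a + ε)).num ::ₘ ((e : ℚ) * (b - ε)).num ::ₘ zify e s := by
        simp [zify]
      simp only [Zify, Multiset.map_cons, ha', hnuma, hnumb]
    rw [h1, h2]
    exact zrule3 _ _ _ _ hdomZ hbz k

lemma chain_transfer {X Y : Multiset (Multiset ℚ)}
    (h : Relation.ReflTransGen StepQ3 X Y) :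
    ∃ d : ℤ, 0 < d ∧ ∀ e : ℤ, 0 < e → d ∣ e →
      (∀ S ∈ X, AllInt e S) →
      (∀ S ∈ Y, AllInt e S) ∧ Relation.ReflTransGen StepZ3 (Zify e X) (Zify e Y) := by
  induction h with
  | refl => exact ⟨1, one_pos, fun e he hd hX => ⟨hX, Relation.ReflTransGen.refl⟩⟩
  | tail _ hstep ih =>
    obtain ⟨d1, hd1, H1⟩ := ih
    obtain ⟨d2, hd2, H2⟩ := step_transfer hstep
    refine ⟨d1 * d2, mul_pos hd1 hd2, fun e he hd hX => ?_⟩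
    obtain ⟨hY, hZ1⟩ := H1 e he (dvd_trans (dvd_mul_right _ _) hd) hX
    obtain ⟨hZ, hZ2⟩ := H2 e he (dvd_trans (dvd_mul_left _ _) hd) hY
    exact ⟨hZ, hZ1.trans hZ2⟩

end Transfer

/-- If a multiset of rationals is C_{Q,3}-realizable, then some positive integer
multiple of it consists of integers and is C_{Z,3}-realizable. -/
theorem exists_mul_CZ3Realizable_of_CQ3Realizable (Λ : Multiset ℚ)
    (h : CQ3Realizable Λ) :
    ∃ q : ℤ, 0 < q ∧ ∃ Λ' : Multiset ℤ,
      Λ'.map (fun x : ℤ => (x : ℚ)) = Λ.map (fun r => (q : ℚ) * r) ∧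
      CZ3Realizable Λ' := by
  obtain ⟨n, hchain⟩ := h
  obtain ⟨d, hd, H⟩ := chain_transfer hchain
  have hX0 : ∀ S ∈ Multiset.replicate n ({0} : Multiset ℚ), AllInt d S := by
    intro S hS r hr
    rw [Multiset.eq_of_mem_replicate hS, Multiset.mem_singleton] at hr
    subst hr
    norm_num
  obtain ⟨hY, hchainZ⟩ := H d hd dvd_rfl hX0
  refine ⟨d, hd, zify d Λ, zify_cast (hY Λ (Multiset.mem_singleton_self _)), n, ?_⟩
  have h1 : Zify d (Multiset.replicate n ({0} : Multiset ℚ))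
      = Multiset.replicate n ({0} : Multiset ℤ) := by
    rw [Zify, Multiset.map_replicate]
    congr 1
    simp [zify]
  have h2 : Zify d ({Λ} : Multiset (Multiset ℚ)) = {zify d Λ} := by simp [Zify]
  rwa [h1, h2] at hchainZ


end CPaper
end

section
/- Let {λ1,...,λn} be a realizable multiset of complex numbers whose Perron root is λ1 (λ1 is real and λ1 ≥ |λj| for all j). Then for every real ε > 0 the multiset {λ1+ε, λ2,...,λn} is realizable. -/
namespace CPaper


/-- A multiset `Λ` of complex numbers is realizable if there is a square nonnegative real
matrix of size `card Λ` whose characteristic polynomial (over `ℂ`) is `∏_{λ ∈ Λ} (X - λ)`,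
i.e. whose eigenvalues counted with algebraic multiplicity are exactly the elements of `Λ`. -/
def Realizable (Λ : Multiset ℂ) : Prop :=
  ∃ A : Matrix (Fin (Multiset.card Λ)) (Fin (Multiset.card Λ)) ℝ,
    (∀ i j, 0 ≤ A i j) ∧
    (A.map (fun x : ℝ => (x : ℂ))).charpoly =
      (Λ.map (fun z : ℂ => Polynomial.X - Polynomial.C z)).prod

open Polynomial Matrix

section Neumann
variable {n : ℕ}
attribute [local instance] Matrix.linftyOpNormedRing Matrix.linftyOpNormedAlgebra Matrix.linftyOpNormedSpace

theorem entry_le_norm (X : Matrix (Fin n) (Fin n) ℝ) (i j : Fin n) : ‖X i j‖ ≤ ‖X‖ := by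
  have h1 : ‖X i j‖₊ ≤ ‖X‖₊ := by
    rw [linfty_opNNNorm_def]
    refine le_trans ?_ (Finset.le_sup (Finset.mem_univ i))
    exact Finset.single_le_sum (f := fun j => ‖X i j‖₊) (fun _ _ => zero_le) (Finset.mem_univ j)
  exact_mod_cast h1

theorem entry_continuous (i j : Fin n) : Continuous (fun X : Matrix (Fin n) (Fin n) ℝ => X i j) := by
  apply (LipschitzWith.of_dist_le_mul (K := 1) (fun X Y => ?_)).continuous
  rw [NNReal.coe_one, one_mul, dist_eq_norm, dist_eq_norm]
  exact entry_le_norm (X - Y) i j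

theorem mul_entry_nonneg {A B : Matrix (Fin n) (Fin n) ℝ} (hA : ∀ i j, 0 ≤ A i j)
    (hB : ∀ i j, 0 ≤ B i j) : ∀ i j, 0 ≤ (A * B) i j := fun i j => by
  rw [Matrix.mul_apply]
  exact Finset.sum_nonneg fun k _ => mul_nonneg (hA i k) (hB k j)

theorem pow_entry_nonneg {A : Matrix (Fin n) (Fin n) ℝ} (hA : ∀ i j, 0 ≤ A i j) (k : ℕ) :
    ∀ i j, 0 ≤ (A ^ k) i j := by
  induction k with
  | zero => intro i j; by_cases h : i = j <;> simp [pow_zero, Matrix.one_apply, h]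
  | succ m ih => rw [pow_succ]; exact mul_entry_nonneg ih hA

theorem norm_lt_one_of_rows (X : Matrix (Fin n) (Fin n) ℝ) (hX : ∀ i j, 0 ≤ X i j)
    (hrow : ∀ i, ∑ j, X i j < 1) : ‖X‖ < 1 := by
  have : ‖X‖₊ < 1 := by
    rw [linfty_opNNNorm_def]
    refine Finset.sup_lt_iff (by norm_num) |>.2 fun i _ => ?_
    have : ((∑ j, ‖X i j‖₊ : NNReal) : ℝ) < 1 := by
      push_cast
      simp_rw [Real.norm_eq_abs]
      calc ∑ j, |X i j| = ∑ j, X i j := by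
            exact Finset.sum_congr rfl fun j _ => abs_of_nonneg (hX i j)
        _ < 1 := hrow i
    exact_mod_cast this
  exact_mod_cast this

theorem neumann (X : Matrix (Fin n) (Fin n) ℝ) (hX : ∀ i j, 0 ≤ X i j)
    (hrow : ∀ i, ∑ j, X i j < 1) :
    ∃ S, (1 - X) * S = 1 ∧ S * (1 - X) = 1 ∧ ∀ i j, 0 ≤ S i j := by
  have hn : ‖X‖ < 1 := norm_lt_one_of_rows X hX hrow
  refine ⟨∑' k : ℕ, X ^ k, mul_neg_geom_series X hn, geom_series_mul_neg X hn, fun i j => ?_⟩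
  have hs : HasSum (fun k : ℕ => X ^ k) (∑' k : ℕ, X ^ k) :=
    (summable_geometric_of_norm_lt_one hn).hasSum
  have ht : Filter.Tendsto (fun s : Finset ℕ => (∑ k ∈ s, X ^ k) i j) Filter.atTop
      (nhds ((∑' k : ℕ, X ^ k) i j)) := ((entry_continuous i j).continuousAt.tendsto).comp hs
  refine ge_of_tendsto ht (Filter.Eventually.of_forall fun s => ?_)
  show 0 ≤ (∑ k ∈ s, X ^ k) i j
  rw [Matrix.sum_apply]
  exact Finset.sum_nonneg fun k _ => pow_entry_nonneg hX k i j
end Neumann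
section Resolvent
variable {n : ℕ}

noncomputable def Emat (A : Matrix (Fin n) (Fin n) ℝ) (t : ℝ) : Matrix (Fin n) (Fin n) ℝ :=
  t • 1 - A

noncomputable def Rmat (A : Matrix (Fin n) (Fin n) ℝ) (t : ℝ) : Matrix (Fin n) (Fin n) ℝ :=
  (Emat A t).det⁻¹ • adjugate (Emat A t)

theorem Rmat_right (A : Matrix (Fin n) (Fin n) ℝ) (t : ℝ) (h : (Emat A t).det ≠ 0) :
    Emat A t * Rmat A t = 1 := by
  rw [Rmat, Matrix.mul_smul, Matrix.mul_adjugate, smul_smul, inv_mul_cancel₀ h, one_smul]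

theorem Rmat_left (A : Matrix (Fin n) (Fin n) ℝ) (t : ℝ) (h : (Emat A t).det ≠ 0) :
    Rmat A t * Emat A t = 1 := by
  rw [Rmat, Matrix.smul_mul, Matrix.adjugate_mul, smul_smul, inv_mul_cancel₀ h, one_smul]

theorem Rmat_unique (A : Matrix (Fin n) (Fin n) ℝ) (t : ℝ) (h : (Emat A t).det ≠ 0)
    (R' : Matrix (Fin n) (Fin n) ℝ) (hR' : Emat A t * R' = 1) : R' = Rmat A t := by
  calc R' = 1 * R' := (Matrix.one_mul R').symm
    _ = (Rmat A t * Emat A t) * R' := by rw [Rmat_left A t h]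
    _ = Rmat A t * (Emat A t * R') := Matrix.mul_assoc _ _ _
    _ = Rmat A t := by rw [hR', Matrix.mul_one]

theorem rmat_pos_large {n : ℕ} (A : Matrix (Fin n) (Fin n) ℝ) (hA : ∀ i j, 0 ≤ A i j) (t : ℝ)
    (ht0 : 0 < t) (ht : ∀ i, ∑ j, A i j < t) :
    (Emat A t).det ≠ 0 ∧ ∀ i j, 0 ≤ Rmat A t i j := by
  obtain ⟨S, hS1, hS2, hSpos⟩ := neumann (t⁻¹ • A) (fun i j => by
      simp only [Matrix.smul_apply, smul_eq_mul]
      exact mul_nonneg (inv_nonneg.2 ht0.le) (hA i j))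
    (fun i => by
      simp only [Matrix.smul_apply, smul_eq_mul, ← Finset.mul_sum]
      rw [inv_mul_lt_iff₀ ht0, mul_one]
      exact ht i)
  have hE : Emat A t = t • (1 - t⁻¹ • A) := by
    rw [smul_sub, smul_smul, mul_inv_cancel₀ (ne_of_gt ht0), one_smul, Emat]
  have hright : Emat A t * (t⁻¹ • S) = 1 := by
    rw [hE, Matrix.smul_mul, Matrix.mul_smul, smul_smul, mul_inv_cancel₀ (ne_of_gt ht0), one_smul,
      hS1]
  have hdet : (Emat A t).det ≠ 0 := by
    intro h0
    have := congrArg Matrix.det hright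
    rw [Matrix.det_mul, h0, zero_mul, Matrix.det_one] at this
    exact zero_ne_one this
  refine ⟨hdet, ?_⟩
  rw [← Rmat_unique A t hdet _ hright]
  intro i j
  simp only [Matrix.smul_apply, smul_eq_mul]
  exact mul_nonneg (inv_nonneg.2 ht0.le) (hSpos i j)

theorem rmat_pos_step {n : ℕ} (A : Matrix (Fin n) (Fin n) ℝ) (t s : ℝ)
    (hdt : (Emat A t).det ≠ 0) (hpos : ∀ i j, 0 ≤ Rmat A t i j)
    (hds : (Emat A s).det ≠ 0) (hst : s ≤ t)
    (hsmall : (t - s) * (∑ i, ∑ j, Rmat A t i j) < 1) :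
    ∀ i j, 0 ≤ Rmat A s i j := by
  set R := Rmat A t with hR
  obtain ⟨S, hS1, hS2, hSpos⟩ := neumann ((t - s) • R)
    (fun i j => by
      simp only [Matrix.smul_apply, smul_eq_mul]
      exact mul_nonneg (by linarith) (hpos i j))
    (fun i => by
      simp only [Matrix.smul_apply, smul_eq_mul, ← Finset.mul_sum]
      calc (t - s) * ∑ j, R i j ≤ (t - s) * ∑ i, ∑ j, R i j := by
            apply mul_le_mul_of_nonneg_left _ (by linarith)
            exact Finset.single_le_sum
              (f := fun i => ∑ j, R i j)
              (fun i _ => Finset.sum_nonneg fun j _ => hpos i j) (Finset.mem_univ i)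
        _ < 1 := hsmall)
  have hfact : Emat A s = Emat A t * (1 - (t - s) • R) := by
    rw [Matrix.mul_sub, Matrix.mul_one, Matrix.mul_smul, Rmat_right A t hdt]
    show Emat A s = Emat A t - (t - s) • 1
    simp only [Emat]
    module
  have hright : Emat A s * (S * R) = 1 := by
    rw [hfact, Matrix.mul_assoc, ← Matrix.mul_assoc (1 - (t - s) • R) S, hS1,
      Matrix.one_mul, Rmat_right A t hdt]
  rw [← Rmat_unique A s hds _ hright]
  exact mul_entry_nonneg hSpos hpos

theorem rmat_continuousAt {n : ℕ} (A : Matrix (Fin n) (Fin n) ℝ) (c : ℝ)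
    (hc : (Emat A c).det ≠ 0) (i j : Fin n) :
    ContinuousAt (fun t => Rmat A t i j) c := by
  have hE : Continuous fun t : ℝ => Emat A t := by
    simp only [Emat]
    exact (continuous_id.smul continuous_const).sub continuous_const
  have hd : Continuous fun t : ℝ => (Emat A t).det := hE.matrix_det
  have hadj : Continuous fun t : ℝ => adjugate (Emat A t) i j :=
    (continuous_apply j).comp ((continuous_apply i).comp hE.matrix_adjugate)
  have : ContinuousAt (fun t : ℝ => ((Emat A t).det)⁻¹ * adjugate (Emat A t) i j) c :=
    ((hd.continuousAt.inv₀ hc)).mul hadj.continuousAt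
  simpa only [Rmat, Matrix.smul_apply, smul_eq_mul] using this

theorem rmat_pos_lim {n : ℕ} (A : Matrix (Fin n) (Fin n) ℝ) (c : ℝ)
    (hc : (Emat A c).det ≠ 0) (u : ℕ → ℝ) (hu : Filter.Tendsto u Filter.atTop (nhds c))
    (hp : ∀ k i j, 0 ≤ Rmat A (u k) i j) : ∀ i j, 0 ≤ Rmat A c i j := by
  intro i j
  have := ((rmat_continuousAt A c hc i j).tendsto).comp hu
  exact ge_of_tendsto this (Filter.Eventually.of_forall fun k => hp k i j)

theorem rmat_pos {n : ℕ} (A : Matrix (Fin n) (Fin n) ℝ) (r : ℝ) (hA : ∀ i j, 0 ≤ A i j)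
    (hdet : ∀ t, r < t → (Emat A t).det ≠ 0) (hr : 0 ≤ r) :
    ∀ s, r < s → ∀ i j, 0 ≤ Rmat A s i j := by
  intro s hs
  set t0 : ℝ := 1 + r + ∑ i, ∑ j, A i j with ht0def
  have htot : 0 ≤ ∑ i, ∑ j, A i j :=
    Finset.sum_nonneg fun i _ => Finset.sum_nonneg fun j _ => hA i j
  have hrows : ∀ t : ℝ, t0 ≤ t → ∀ i, ∑ j, A i j < t := by
    intro t ht i
    have h1 : ∑ j, A i j ≤ ∑ i, ∑ j, A i j :=
      Finset.single_le_sum (f := fun i => ∑ j, A i j)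
        (fun i _ => Finset.sum_nonneg fun j _ => hA i j) (Finset.mem_univ i)
    have : ∑ j, A i j < t0 := by rw [ht0def]; linarith
    linarith
  have ht0pos : ∀ t : ℝ, t0 ≤ t → 0 < t := fun t ht => by rw [ht0def] at ht; linarith
  have hlarge : ∀ t : ℝ, t0 ≤ t → ∀ i j, 0 ≤ Rmat A t i j := fun t ht =>
    (rmat_pos_large A hA t (ht0pos t ht) (hrows t ht)).2
  rcases le_or_gt t0 s with hcase | hcase
  · exact hlarge s hcase
  -- s < t0
  have hst0 : s ≤ t0 := hcase.le
  have hrt0 : r < t0 := lt_trans hs hcase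
  set T : Set ℝ := {t | t ∈ Set.Icc s t0 ∧ ∀ i j, 0 ≤ Rmat A t i j} with hT
  have hT0 : t0 ∈ T := ⟨⟨hst0, le_refl _⟩, hlarge t0 (le_refl _)⟩
  have hTne : T.Nonempty := ⟨t0, hT0⟩
  have hTbdd : BddBelow T := ⟨s, fun t ht => ht.1.1⟩
  set c := sInf T with hc
  have hsc : s ≤ c := le_csInf hTne fun t ht => ht.1.1
  have hct0 : c ≤ t0 := csInf_le hTbdd hT0
  have hrc : r < c := lt_of_lt_of_le hs hsc
  have hdc : (Emat A c).det ≠ 0 := hdet c hrc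
  have hposc : ∀ i j, 0 ≤ Rmat A c i j := by
    obtain ⟨u, _, hu1, hu2⟩ := exists_seq_tendsto_sInf hTne hTbdd
    exact rmat_pos_lim A c hdc u hu1 fun k => (hu2 k).2
  rcases eq_or_lt_of_le hsc with heq | hlt
  · rw [← heq] at hposc; exact hposc
  -- s < c : contradiction
  exfalso
  set ρ : ℝ := ∑ i, ∑ j, Rmat A c i j with hρ
  have hρ0 : 0 ≤ ρ :=
    Finset.sum_nonneg fun i _ => Finset.sum_nonneg fun j _ => hposc i j
  set δ : ℝ := (1 + ρ)⁻¹ with hδ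
  have hδpos : 0 < δ := inv_pos.2 (by linarith)
  set s' : ℝ := max s (c - δ / 2) with hs'
  have hs's : s ≤ s' := le_max_left _ _
  have hs'c : s' < c := max_lt hlt (by linarith)
  have hcs' : c - s' ≤ δ / 2 := by
    have : c - δ / 2 ≤ s' := le_max_right _ _
    linarith
  have hsmall : (c - s') * ρ < 1 := by
    have h1 : (c - s') * ρ ≤ (δ / 2) * ρ := mul_le_mul_of_nonneg_right hcs' hρ0
    have h2 : (δ / 2) * ρ < δ * (1 + ρ) := by
      have := hδpos
      nlinarith
    have h3 : δ * (1 + ρ) = 1 := by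
      rw [hδ]
      field_simp
    linarith
  have hps' : ∀ i j, 0 ≤ Rmat A s' i j :=
    rmat_pos_step A c s' hdc hposc (hdet s' (lt_of_lt_of_le hs hs's)) hs'c.le hsmall
  have : s' ∈ T := ⟨⟨hs's, le_trans hs'c.le hct0⟩, hps'⟩
  exact absurd (csInf_le hTbdd this) (not_le.2 hs'c)

theorem eval_charpoly' {n : ℕ} (A : Matrix (Fin n) (Fin n) ℝ) (t : ℝ) :
    A.charpoly.eval t = (Emat A t).det := by
  rw [Matrix.charpoly]
  have h1 : Polynomial.eval t A.charmatrix.det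
      = ((A.charmatrix).map (Polynomial.evalRingHom t)).det := by
    rw [← RingHom.mapMatrix_apply, ← RingHom.map_det]; rfl
  rw [h1]
  congr 1
  ext i j
  by_cases h : i = j
  · subst h
    simp [Matrix.charmatrix_apply_eq, Emat, Matrix.sub_apply, Matrix.smul_apply, Matrix.one_apply]
  · simp [Matrix.charmatrix_apply_ne _ _ _ h, Emat, Matrix.sub_apply, Matrix.smul_apply,
      Matrix.one_apply_ne h]

theorem brauer {n : ℕ} (A : Matrix (Fin n) (Fin n) ℝ) (r : ℝ)
    (hdet : ∀ t, r < t → (Emat A t).det ≠ 0)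
    (w u : Fin n → ℝ) (hw : A *ᵥ w = r • w) :
    (X - C r) * (A + vecMulVec w u).charpoly = (X - C (r + u ⬝ᵥ w)) * A.charpoly := by
  apply Polynomial.eq_of_infinite_eval_eq
  apply Set.Infinite.mono (s := Set.Ioi r) _ (Set.Ioi_infinite r)
  intro x hx
  have hxr : r < x := hx
  have hxr' : x - r ≠ 0 := sub_ne_zero.2 (ne_of_gt hxr)
  have hdx := hdet x hxr
  -- E_A x *ᵥ w = (x - r) • w
  have hEw : Emat A x *ᵥ w = (x - r) • w := by
    rw [Emat, Matrix.sub_mulVec, Matrix.smul_mulVec, Matrix.one_mulVec, hw, sub_smul]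
  -- Rmat x *ᵥ w = (x - r)⁻¹ • w
  have hRw : Rmat A x *ᵥ w = (x - r)⁻¹ • w := by
    have h1 : w = (x - r) • (Rmat A x *ᵥ w) := by
      calc w = (Rmat A x * Emat A x) *ᵥ w := by rw [Rmat_left A x hdx, Matrix.one_mulVec]
        _ = Rmat A x *ᵥ (Emat A x *ᵥ w) := by rw [Matrix.mulVec_mulVec]
        _ = (x - r) • (Rmat A x *ᵥ w) := by rw [hEw, Matrix.mulVec_smul]
    have h2 : (x - r)⁻¹ • w = Rmat A x *ᵥ w := by
      nth_rewrite 1 [h1]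
      rw [smul_smul, inv_mul_cancel₀ hxr', one_smul]
    exact h2.symm
  -- factorization
  have hfact : Emat (A + vecMulVec w u) x
      = Emat A x * (1 - vecMulVec (Rmat A x *ᵥ w) u) := by
    rw [Matrix.mul_sub, Matrix.mul_one]
    have h2 : Emat A x * vecMulVec (Rmat A x *ᵥ w) u = vecMulVec w u := by
      rw [Matrix.vecMulVec_eq (Fin 1), Matrix.vecMulVec_eq (Fin 1), ← Matrix.mul_assoc,
        ← Matrix.replicateCol_mulVec, Matrix.mulVec_mulVec, Rmat_right A x hdx, Matrix.one_mulVec]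
    rw [h2, Emat, Emat, sub_sub]
  have hdet2 : (1 - vecMulVec (Rmat A x *ᵥ w) u : Matrix (Fin n) (Fin n) ℝ).det
      = 1 - (x - r)⁻¹ * (u ⬝ᵥ w) := by
    rw [hRw]
    have : (1 : Matrix (Fin n) (Fin n) ℝ) - vecMulVec ((x - r)⁻¹ • w) u
        = 1 + Matrix.replicateCol (Fin 1) (-((x - r)⁻¹ • w)) * Matrix.replicateRow (Fin 1) u := by
      rw [Matrix.vecMulVec_eq (Fin 1)]
      ext i j
      simp [Matrix.sub_apply, Matrix.add_apply, Matrix.mul_apply, Matrix.col, Matrix.row]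
      ring
    rw [this]
    erw [Matrix.det_one_add_replicateCol_mul_replicateRow (ι := Fin 1)]
    rw [dotProduct_neg, dotProduct_smul]
    simp [smul_eq_mul]
    ring
  have hdetB : (Emat (A + vecMulVec w u) x).det
      = (Emat A x).det * (1 - (x - r)⁻¹ * (u ⬝ᵥ w)) := by
    rw [hfact, Matrix.det_mul, hdet2]
  show Polynomial.eval x ((X - C r) * (A + vecMulVec w u).charpoly)
    = Polynomial.eval x ((X - C (r + u ⬝ᵥ w)) * A.charpoly)
  rw [Polynomial.eval_mul, Polynomial.eval_mul, Polynomial.eval_sub, Polynomial.eval_sub,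
    Polynomial.eval_X, Polynomial.eval_C, Polynomial.eval_C, eval_charpoly', eval_charpoly',
    hdetB]
  field_simp
  ring

theorem perron_vector {n : ℕ} (A : Matrix (Fin n) (Fin n) ℝ) (r : ℝ)
    (hA : ∀ i j, 0 ≤ A i j) (hr : 0 ≤ r)
    (hdet : ∀ t, r < t → (Emat A t).det ≠ 0) (hev : (Emat A r).det = 0) :
    ∃ w : Fin n → ℝ, (∀ i, 0 ≤ w i) ∧ (∑ i, w i = 1) ∧ A *ᵥ w = r • w := by
  classical
  -- real eigenvector
  obtain ⟨v, hv0, hv⟩ := (Matrix.exists_mulVec_eq_zero_iff).2 hev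
  have hAv : A *ᵥ v = r • v := by
    have : r • v - A *ᵥ v = 0 := by
      rw [← hv, Emat, Matrix.sub_mulVec, Matrix.smul_mulVec, Matrix.one_mulVec]
    exact (sub_eq_zero.mp this).symm
  have hrpos := rmat_pos A r hA hdet hr
  obtain ⟨i0, hi0⟩ := Function.ne_iff.1 hv0
  have hi0' : v i0 ≠ 0 := hi0
  set Vm : ℝ := ∑ j, |v j| with hVm
  have hVmpos : 0 < Vm := by
    apply Finset.sum_pos' (fun j _ => abs_nonneg _)
    exact ⟨i0, Finset.mem_univ i0, abs_pos.2 hi0'⟩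
  set c : ℝ := |v i0| / Vm with hc
  have hcpos : 0 < c := div_pos (abs_pos.2 hi0') hVmpos
  set t : ℕ → ℝ := fun k => r + ((k : ℝ) + 1)⁻¹ with ht
  have htr : ∀ k, r < t k := fun k => by
    have h0 : (0:ℝ) < ((k:ℝ)+1)⁻¹ := by positivity
    simp only [ht]; linarith
  have htsub : ∀ k, t k - r = ((k:ℝ)+1)⁻¹ := fun k => by simp [ht]
  set y : ℕ → Fin n → ℝ := fun k => Rmat A (t k) *ᵥ (fun _ => 1) with hy
  have hypos : ∀ k i, 0 ≤ y k i := by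
    intro k i
    simp only [hy, Matrix.mulVec, dotProduct]
    exact Finset.sum_nonneg fun j _ => by
      simpa using hrpos (t k) (htr k) i j
  have hyrow : ∀ k i, y k i = ∑ j, Rmat A (t k) i j := by
    intro k i
    simp [hy, Matrix.mulVec, dotProduct]
  set σ : ℕ → ℝ := fun k => ∑ i, y k i with hσ
  have hσnn : ∀ k, 0 ≤ σ k := fun k => Finset.sum_nonneg fun i _ => hypos k i
  have hRv : ∀ k, Rmat A (t k) *ᵥ v = (t k - r)⁻¹ • v := by
    intro k
    have hdx := hdet (t k) (htr k)
    have hEw : Emat A (t k) *ᵥ v = (t k - r) • v := by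
      rw [Emat, Matrix.sub_mulVec, Matrix.smul_mulVec, Matrix.one_mulVec, hAv, sub_smul]
    have h1 : v = (t k - r) • (Rmat A (t k) *ᵥ v) := by
      calc v = (Rmat A (t k) * Emat A (t k)) *ᵥ v := by
            rw [Rmat_left A (t k) hdx, Matrix.one_mulVec]
        _ = Rmat A (t k) *ᵥ (Emat A (t k) *ᵥ v) := by rw [Matrix.mulVec_mulVec]
        _ = (t k - r) • (Rmat A (t k) *ᵥ v) := by rw [hEw, Matrix.mulVec_smul]
    have h2 : (t k - r)⁻¹ • v = Rmat A (t k) *ᵥ v := by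
      nth_rewrite 1 [h1]
      rw [smul_smul, inv_mul_cancel₀ (ne_of_gt (by linarith [htr k])), one_smul]
    exact h2.symm
  have hσlb : ∀ k, (t k - r)⁻¹ * c ≤ σ k := by
    intro k
    have h3 : (t k - r)⁻¹ * |v i0| = |(Rmat A (t k) *ᵥ v) i0| := by
      rw [hRv k]
      have h4 : 0 < (t k - r)⁻¹ := by
        have h5 := htr k
        have : 0 < t k - r := by linarith
        positivity
      simp only [Pi.smul_apply, smul_eq_mul, abs_mul, abs_of_pos h4]
    have h5 : |(Rmat A (t k) *ᵥ v) i0| ≤ Vm * y k i0 := by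
      rw [Matrix.mulVec, dotProduct]
      calc |∑ j, Rmat A (t k) i0 j * v j| ≤ ∑ j, |Rmat A (t k) i0 j * v j| :=
            Finset.abs_sum_le_sum_abs _ _
        _ ≤ ∑ j, Rmat A (t k) i0 j * Vm := by
            apply Finset.sum_le_sum
            intro j _
            rw [abs_mul, abs_of_nonneg (hrpos (t k) (htr k) i0 j)]
            apply mul_le_mul_of_nonneg_left _ (hrpos (t k) (htr k) i0 j)
            exact Finset.single_le_sum (f := fun j => |v j|) (fun j _ => abs_nonneg _)
              (Finset.mem_univ j)
        _ = Vm * y k i0 := by rw [hyrow, ← Finset.sum_mul]; ring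
    have h6 : y k i0 ≤ σ k :=
      Finset.single_le_sum (f := fun i => y k i) (fun i _ => hypos k i) (Finset.mem_univ i0)
    have h7 : (t k - r)⁻¹ * |v i0| ≤ Vm * σ k := by
      rw [h3]
      exact le_trans h5 (mul_le_mul_of_nonneg_left h6 (le_of_lt hVmpos))
    rw [hc, div_eq_mul_inv]
    calc (t k - r)⁻¹ * (|v i0| * Vm⁻¹) = ((t k - r)⁻¹ * |v i0|) * Vm⁻¹ := by ring
      _ ≤ (Vm * σ k) * Vm⁻¹ := mul_le_mul_of_nonneg_right h7 (inv_nonneg.2 hVmpos.le)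
      _ = σ k := by field_simp
  have hσpos : ∀ k, 0 < σ k := fun k => by
    have h5 := htr k
    have h4 : 0 < (t k - r)⁻¹ * c := by
      have : 0 < t k - r := by linarith
      positivity
    linarith [hσlb k]
  set x : ℕ → Fin n → ℝ := fun k => (σ k)⁻¹ • y k with hx
  have hxsimp : ∀ k, x k ∈ stdSimplex ℝ (Fin n) := by
    intro k
    constructor
    · intro i
      exact mul_nonneg (inv_nonneg.2 (hσnn k)) (hypos k i)
    · simp only [hx, Pi.smul_apply, smul_eq_mul, ← Finset.mul_sum]
      exact inv_mul_cancel₀ (ne_of_gt (hσpos k))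
  obtain ⟨w, hwS, φ, hφ, hconv⟩ :=
    (isCompact_stdSimplex ℝ (Fin n)).tendsto_subseq hxsimp
  refine ⟨w, hwS.1, hwS.2, ?_⟩
  have hkey : ∀ k, A *ᵥ x k = t k • x k - (σ k)⁻¹ • (fun _ => (1:ℝ)) := by
    intro k
    have hEy : Emat A (t k) *ᵥ y k = (fun _ => (1:ℝ)) := by
      rw [hy, Matrix.mulVec_mulVec, Rmat_right A (t k) (hdet (t k) (htr k)), Matrix.one_mulVec]
    have h8 : t k • y k - A *ᵥ y k = (fun _ => (1:ℝ)) := by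
      rw [← hEy, Emat, Matrix.sub_mulVec, Matrix.smul_mulVec, Matrix.one_mulVec]
    have h9 : A *ᵥ y k = t k • y k - (fun _ => (1:ℝ)) := by
      rw [← h8]; abel
    rw [hx]
    show A *ᵥ ((σ k)⁻¹ • y k) = t k • (σ k)⁻¹ • y k - (σ k)⁻¹ • (fun _ => (1:ℝ))
    rw [Matrix.mulVec_smul, h9, smul_sub, smul_comm]
  have htlim : Filter.Tendsto t Filter.atTop (nhds r) := by
    have h10 : Filter.Tendsto (fun k : ℕ => ((k:ℝ)+1)⁻¹) Filter.atTop (nhds 0) := by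
      apply tendsto_inv_atTop_zero.comp
      exact Filter.tendsto_atTop_add_const_right _ 1 tendsto_natCast_atTop_atTop
    simpa [ht] using tendsto_const_nhds.add h10
  have hσinvlim : Filter.Tendsto (fun k => (σ k)⁻¹) Filter.atTop (nhds 0) := by
    apply squeeze_zero (fun k => inv_nonneg.2 (hσnn k)) (g := fun k => (t k - r) / c)
    · intro k
      have h11 : (t k - r)⁻¹ * c ≤ σ k := hσlb k
      have h12 : 0 < t k - r := by linarith [htr k]
      have h13 : 0 < (t k - r)⁻¹ * c := by positivity
      calc (σ k)⁻¹ ≤ ((t k - r)⁻¹ * c)⁻¹ := inv_anti₀ h13 h11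
        _ = (t k - r) / c := by rw [mul_inv, inv_inv, div_eq_mul_inv]
    · have : Filter.Tendsto (fun k => t k - r) Filter.atTop (nhds 0) := by
        simpa using htlim.sub (tendsto_const_nhds (x := r))
      simpa using this.div_const c
  have hmc : Continuous fun z : Fin n → ℝ => A *ᵥ z :=
    LinearMap.continuous_of_finiteDimensional (Matrix.mulVecLin A)
  have hφat : Filter.Tendsto φ Filter.atTop Filter.atTop := hφ.tendsto_atTop
  have hL : Filter.Tendsto (fun k => A *ᵥ x (φ k)) Filter.atTop (nhds (A *ᵥ w)) :=
    ((hmc.tendsto w).comp hconv)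
  have htφ : Filter.Tendsto (t ∘ φ) Filter.atTop (nhds r) := htlim.comp hφat
  have hσφ : Filter.Tendsto (fun k => (σ (φ k))⁻¹) Filter.atTop (nhds 0) := hσinvlim.comp hφat
  have hR : Filter.Tendsto
      (fun k => t (φ k) • x (φ k) - (σ (φ k))⁻¹ • (fun _ => (1:ℝ)))
      Filter.atTop (nhds (r • w - (0:ℝ) • (fun _ => (1:ℝ)))) :=
    ((htφ.smul hconv)).sub (hσφ.smul_const _)
  have heq : (fun k => A *ᵥ x (φ k))
      = fun k => t (φ k) • x (φ k) - (σ (φ k))⁻¹ • (fun _ => (1:ℝ)) := by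
    funext k
    exact hkey (φ k)
  rw [heq] at hL
  have := tendsto_nhds_unique hL hR
  rw [this, zero_smul, sub_zero]


/-- If `{λ1, λ2, ..., λn}` is realizable with Perron root `λ1` (real and dominating
all moduli), then for every real `ε > 0` the multiset `{λ1+ε, λ2,...,λn}` is
realizable. -/
theorem realizable_perron_increase (lam1 : ℂ) (s : Multiset ℂ)
    (hreal : Realizable (lam1 ::ₘ s))
    (h1 : lam1.im = 0)
    (hperron : ∀ z ∈ lam1 ::ₘ s, ‖z‖ ≤ lam1.re)
    (ε : ℝ) (hε : 0 < ε) :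
    Realizable ((lam1 + (ε : ℂ)) ::ₘ s) := by
  classical
  obtain ⟨A, hA, hcp⟩ := hreal
  set r : ℝ := lam1.re with hrdef
  have hlam : lam1 = (r : ℂ) := by
    apply Complex.ext <;> simp [h1, hrdef]
  have hr0 : 0 ≤ r := by
    have h := hperron lam1 (Multiset.mem_cons_self _ _)
    rw [hlam, Complex.norm_real, Real.norm_eq_abs] at h
    exact le_trans (abs_nonneg r) h
  have hfun : (fun x : ℝ => (x : ℂ)) = ⇑(algebraMap ℝ ℂ) := rfl
  have hmap : A.charpoly.map (algebraMap ℝ ℂ)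
      = ((lam1 ::ₘ s).map (fun z => X - C z)).prod := by
    rw [← Matrix.charpoly_map A (algebraMap ℝ ℂ), ← hfun]
    exact hcp
  have hevalmap : ∀ u : ℝ, (algebraMap ℝ ℂ) (A.charpoly.eval u)
      = ((lam1 ::ₘ s).map (fun z => (u:ℂ) - z)).prod := by
    intro u
    have h1' : (A.charpoly.map (algebraMap ℝ ℂ)).eval ((algebraMap ℝ ℂ) u)
        = (algebraMap ℝ ℂ) (A.charpoly.eval u) := by
      rw [Polynomial.eval_map, Polynomial.eval₂_at_apply]
    rw [← h1', hmap, Polynomial.eval_multiset_prod, Multiset.map_map]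
    congr 1
    apply Multiset.map_congr rfl
    intro z _
    simp
  have hdet : ∀ u : ℝ, r < u → (Emat A u).det ≠ 0 := by
    intro u hu
    rw [← eval_charpoly']
    intro h0
    have h2 := hevalmap u
    rw [h0, map_zero] at h2
    have hne : ((lam1 ::ₘ s).map (fun z => (u:ℂ) - z)).prod ≠ 0 := by
      apply Multiset.prod_ne_zero
      intro hmem
      rw [Multiset.mem_map] at hmem
      obtain ⟨z, hz, hz0⟩ := hmem
      have hzu : z = (u:ℂ) := by
        have := sub_eq_zero.mp hz0
        exact this.symm
      have habs := hperron z hz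
      rw [hzu, Complex.norm_real, Real.norm_eq_abs, abs_of_pos (lt_of_le_of_lt hr0 hu)] at habs
      exact absurd habs (not_le.2 hu)
    exact hne h2.symm
  have hev0 : (Emat A r).det = 0 := by
    rw [← eval_charpoly']
    have h2 := hevalmap r
    have h3 : ((lam1 ::ₘ s).map (fun z => (r:ℂ) - z)).prod = 0 := by
      apply Multiset.prod_eq_zero
      rw [Multiset.mem_map]
      exact ⟨lam1, Multiset.mem_cons_self _ _, by rw [hlam, sub_self]⟩
    rw [h3] at h2
    rwa [show (algebraMap ℝ ℂ) = Complex.ofRealHom from rfl, Complex.ofRealHom_eq_coe,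
      Complex.ofReal_eq_zero] at h2
  obtain ⟨w, hw0, hwsum, hwA⟩ := perron_vector A r hA hr0 hdet hev0
  have hex : ∃ i1, 0 < w i1 := by
    by_contra hno
    push_neg at hno
    have hz : ∑ i, w i = 0 := Finset.sum_eq_zero fun i _ => le_antisymm (hno i) (hw0 i)
    rw [hwsum] at hz
    norm_num at hz
  obtain ⟨i1, hi1⟩ := hex
  set u : Fin _ → ℝ := Pi.single i1 (ε / w i1) with hu
  have hu0 : ∀ j, 0 ≤ u j := by
    intro j
    rw [hu]
    by_cases h : j = i1
    · subst h; rw [Pi.single_eq_same]; positivity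
    · rw [Pi.single_eq_of_ne h]
  have huw : u ⬝ᵥ w = ε := by
    rw [hu, single_dotProduct]
    field_simp
  set B := A + vecMulVec w u with hB
  have hBpos : ∀ i j, 0 ≤ B i j := by
    intro i j
    rw [hB]
    have : (A + vecMulVec w u) i j = A i j + w i * u j := by
      simp [Matrix.add_apply, Matrix.vecMulVec_apply]
    rw [this]
    exact add_nonneg (hA i j) (mul_nonneg (hw0 i) (hu0 j))
  have hbr := brauer A r hdet w u hwA
  rw [huw] at hbr
  have hbrC := congrArg (Polynomial.map (algebraMap ℝ ℂ)) hbr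
  rw [Polynomial.map_mul, Polynomial.map_mul, Polynomial.map_sub, Polynomial.map_sub,
    Polynomial.map_X, Polynomial.map_C, Polynomial.map_C, hmap,
    ← Matrix.charpoly_map (A + vecMulVec w u) (algebraMap ℝ ℂ)] at hbrC
  rw [Multiset.map_cons, Multiset.prod_cons] at hbrC
  have hrc : (algebraMap ℝ ℂ) r = lam1 := by rw [hlam]; rfl
  have hrec : (algebraMap ℝ ℂ) (r + ε) = lam1 + (ε : ℂ) := by
    rw [map_add, hrc]
    congr 1
  rw [hrc, hrec] at hbrC
  have hcancel : ((A + vecMulVec w u).map (algebraMap ℝ ℂ)).charpoly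
      = (X - C (lam1 + (ε:ℂ))) * (s.map (fun z => X - C z)).prod := by
    apply mul_left_cancel₀ (Polynomial.X_sub_C_ne_zero lam1)
    rw [hbrC]
    ring
  show Realizable _
  rw [Realizable]
  have hcard : Multiset.card ((lam1 + (ε:ℂ)) ::ₘ s) = Multiset.card (lam1 ::ₘ s) := by
    simp
  rw [hcard]
  refine ⟨B, hBpos, ?_⟩
  rw [hfun, hB, hcancel, Multiset.map_cons, Multiset.prod_cons]

end Resolvent

end CPaper
end

section
/- If a finite multiset of real numbers is C-realizable, then it is realizable, i.e. there exists a square matrix with nonnegative real entries whose eigenvalues counted with algebraic multiplicity are exactly the elements of the multiset. -/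
namespace CPaper


/-- One step of the C-realizability rewriting procedure on collections of multisets
of real numbers (rules (a), (b), (c); in rule (c) the second element may be
increased or decreased by ε). -/
inductive StepR : Multiset (Multiset ℝ) → Multiset (Multiset ℝ) → Prop where
  | join (A B : Multiset ℝ) (C : Multiset (Multiset ℝ)) :
      StepR (A ::ₘ B ::ₘ C) ((A + B) ::ₘ C)
  | ruleB (a ε : ℝ) (s : Multiset ℝ) (C : Multiset (Multiset ℝ))
      (hdom : ∀ b ∈ a ::ₘ s, |b| ≤ a) (hε : 0 < ε) :
      StepR ((a ::ₘ s) ::ₘ C) (((a + ε) ::ₘ s) ::ₘ C)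
  | ruleCplus (a b ε : ℝ) (s : Multiset ℝ) (C : Multiset (Multiset ℝ))
      (hdom : ∀ c ∈ a ::ₘ b ::ₘ s, |c| ≤ a) (hε : 0 < ε) :
      StepR ((a ::ₘ b ::ₘ s) ::ₘ C) (((a + ε) ::ₘ (b + ε) ::ₘ s) ::ₘ C)
  | ruleCminus (a b ε : ℝ) (s : Multiset ℝ) (C : Multiset (Multiset ℝ))
      (hdom : ∀ c ∈ a ::ₘ b ::ₘ s, |c| ≤ a) (hε : 0 < ε) :
      StepR ((a ::ₘ b ::ₘ s) ::ₘ C) (((a + ε) ::ₘ (b - ε) ::ₘ s) ::ₘ C)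

/-- A multiset of reals is C-realizable. -/
def CRealizable (Λ : Multiset ℝ) : Prop :=
  ∃ n : ℕ, Relation.ReflTransGen StepR (Multiset.replicate n ({0} : Multiset ℝ)) {Λ}

open Polynomial Matrix

lemma eval_charpoly'_s19 {n : ℕ} (M : Matrix (Fin n) (Fin n) ℝ) (x : ℝ) :
    M.charpoly.eval x = (x • (1 : Matrix (Fin n) (Fin n) ℝ) - M).det := by
  rw [Matrix.charpoly, ← Polynomial.coe_evalRingHom, RingHom.map_det]
  congr 1
  ext i j
  by_cases h : i = j
  · subst h
    simp [charmatrix_apply_eq, Matrix.sub_apply, Matrix.smul_apply, Matrix.one_apply_eq]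
  · simp [charmatrix_apply_ne _ _ _ h, Matrix.sub_apply, Matrix.smul_apply,
      Matrix.one_apply_ne h]

lemma key2 {n : ℕ} (A : Matrix (Fin n) (Fin n) ℝ) (v w c d : Fin n → ℝ) (μ ν : ℝ)
    (hv : A *ᵥ v = μ • v) (hw : A *ᵥ w = ν • w) (hdv : d ⬝ᵥ v = 0) :
    (A + vecMulVec v c + vecMulVec w d).charpoly * ((X - C μ) * (X - C ν)) =
    A.charpoly * ((X - C (μ + c ⬝ᵥ v)) * (X - C (ν + d ⬝ᵥ w))) := by
  apply Polynomial.eq_of_infinite_eval_eq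
  have hfin : ({x : ℝ | A.charpoly.IsRoot x} ∪ {μ} ∪ {ν}).Finite :=
    (Set.Finite.union (Set.Finite.union
      (Polynomial.finite_setOf_isRoot (Matrix.charpoly_monic A).ne_zero)
      (Set.finite_singleton _)) (Set.finite_singleton _))
  apply Set.Infinite.mono (s := ({x : ℝ | A.charpoly.IsRoot x} ∪ {μ} ∪ {ν})ᶜ)
  swap
  · exact hfin.infinite_compl
  intro x hx
  simp only [Set.mem_compl_iff, Set.mem_union, Set.mem_singleton_iff, not_or,
    Set.mem_setOf_eq] at hx
  obtain ⟨⟨hroot, hxμ⟩, hxν⟩ := hx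
  set N : Matrix (Fin n) (Fin n) ℝ := x • (1 : Matrix (Fin n) (Fin n) ℝ) - A with hN
  have hdet : N.det = A.charpoly.eval x := (eval_charpoly'_s19 A x).symm
  have hdet0 : IsUnit N.det := by
    rw [hdet]; exact isUnit_iff_ne_zero.mpr hroot
  have hNv : ∀ (u : Fin n → ℝ) (lam : ℝ), A *ᵥ u = lam • u → x ≠ lam →
      N⁻¹ *ᵥ u = (x - lam)⁻¹ • u := by
    intro u lam hu hne
    have h1 : N *ᵥ u = (x - lam) • u := by
      rw [hN, Matrix.sub_mulVec, hu, Matrix.smul_mulVec, Matrix.one_mulVec, sub_smul]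
    have h2 : N⁻¹ *ᵥ (N *ᵥ u) = u := by
      rw [Matrix.mulVec_mulVec, Matrix.nonsing_inv_mul _ hdet0, Matrix.one_mulVec]
    rw [h1, Matrix.mulVec_smul] at h2
    calc N⁻¹ *ᵥ u = (x - lam)⁻¹ • ((x - lam) • N⁻¹ *ᵥ u) := by
          rw [smul_smul, inv_mul_cancel₀ (sub_ne_zero.mpr hne), one_smul]
      _ = (x - lam)⁻¹ • u := by rw [h2]
  set U : Matrix (Fin n) (Fin 2) ℝ := Matrix.of (fun i t => ![v i, w i] t) with hU
  set V : Matrix (Fin 2) (Fin n) ℝ := Matrix.of (fun t j => ![c j, d j] t) with hV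
  have hUV : vecMulVec v c + vecMulVec w d = U * V := by
    ext i j
    simp [Matrix.mul_apply, Fin.sum_univ_two, vecMulVec_apply, hU, hV]
  have hsplit : x • (1 : Matrix (Fin n) (Fin n) ℝ) - (A + vecMulVec v c + vecMulVec w d)
      = N * (1 - N⁻¹ * (U * V)) := by
    rw [Matrix.mul_sub, Matrix.mul_one, ← Matrix.mul_assoc,
      Matrix.mul_nonsing_inv _ hdet0, Matrix.one_mul, hN, add_assoc, hUV]
    abel
  have hcol : ∀ s : Fin 2, (fun j => (N⁻¹ * U) j s) = N⁻¹ *ᵥ (fun k => U k s) := by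
    intro s; ext j; simp [Matrix.mul_apply, Matrix.mulVec, dotProduct]
  have hcol0 : (N⁻¹ *ᵥ (fun k => U k 0)) = (x - μ)⁻¹ • v := by
    have : (fun k => U k 0) = v := by ext k; simp [hU]
    rw [this]; exact hNv v μ hv hxμ
  have hcol1 : (N⁻¹ *ᵥ (fun k => U k 1)) = (x - ν)⁻¹ • w := by
    have : (fun k => U k 1) = w := by ext k; simp [hU]
    rw [this]; exact hNv w ν hw hxν
  have hW : ∀ t s : Fin 2, (V * (N⁻¹ * U)) t s =
      ![![(x - μ)⁻¹ * (c ⬝ᵥ v), (x - ν)⁻¹ * (c ⬝ᵥ w)],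
        ![(x - μ)⁻¹ * (d ⬝ᵥ v), (x - ν)⁻¹ * (d ⬝ᵥ w)]] t s := by
    intro t s
    have : (V * (N⁻¹ * U)) t s = (fun j => V t j) ⬝ᵥ (fun j => (N⁻¹ * U) j s) := by
      simp [Matrix.mul_apply, dotProduct]
    rw [this, hcol s]
    fin_cases t <;> fin_cases s <;>
      simp [hcol0, hcol1, hV, dotProduct_smul, smul_eq_mul]
  have hdetW : (1 - V * (N⁻¹ * U)).det =
      (1 - (x - μ)⁻¹ * (c ⬝ᵥ v)) * (1 - (x - ν)⁻¹ * (d ⬝ᵥ w)) := by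
    rw [Matrix.det_fin_two]
    simp only [Matrix.sub_apply, Matrix.one_apply, hW]
    simp [hdv]
  have hLHS : (x • (1 : Matrix (Fin n) (Fin n) ℝ)
      - (A + vecMulVec v c + vecMulVec w d)).det =
      N.det * ((1 - (x - μ)⁻¹ * (c ⬝ᵥ v)) * (1 - (x - ν)⁻¹ * (d ⬝ᵥ w))) := by
    rw [hsplit, Matrix.det_mul, ← Matrix.mul_assoc, Matrix.det_one_sub_mul_comm, hdetW]
  simp only [Set.mem_setOf_eq, eval_mul, eval_sub, eval_X, eval_C]
  rw [eval_charpoly'_s19 (A + vecMulVec v c + vecMulVec w d) x, hLHS, ← hdet]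
  field_simp [sub_ne_zero.mpr hxμ, sub_ne_zero.mpr hxν]
  ring

lemma key1 {n : ℕ} (A : Matrix (Fin n) (Fin n) ℝ) (v c : Fin n → ℝ) (μ : ℝ)
    (hv : A *ᵥ v = μ • v) :
    (A + vecMulVec v c).charpoly * (X - C μ) = A.charpoly * (X - C (μ + c ⬝ᵥ v)) := by
  have h := key2 A v (0 : Fin n → ℝ) c (0 : Fin n → ℝ) μ (μ + 1) hv (by simp) (by simp)
  have hz : vecMulVec (0 : Fin n → ℝ) (0 : Fin n → ℝ) = 0 := by
    ext i j; simp [vecMulVec_apply]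
  rw [hz, add_zero] at h
  simp only [zero_dotProduct, add_zero] at h
  have hne : (X - C (μ + 1) : ℝ[X]) ≠ 0 := Polynomial.X_sub_C_ne_zero _
  apply mul_right_cancel₀ hne
  calc (A + vecMulVec v c).charpoly * (X - C μ) * (X - C (μ + 1))
      = (A + vecMulVec v c).charpoly * ((X - C μ) * (X - C (μ + 1))) := by ring
    _ = A.charpoly * ((X - C (μ + c ⬝ᵥ v)) * (X - C (μ + 1))) := h
    _ = A.charpoly * (X - C (μ + c ⬝ᵥ v)) * (X - C (μ + 1)) := by ring

lemma evalProd (Λ : Multiset ℝ) (x : ℝ) :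
    Polynomial.eval x ((Λ.map fun t : ℝ => X - C t).prod) =
      (Λ.map fun t : ℝ => x - t).prod := by
  rw [Polynomial.eval_multiset_prod, Multiset.map_map]
  congr 1
  apply Multiset.map_congr rfl
  intro t _
  simp

def GoodW (Λ : Multiset ℝ) (r : ℝ) : Prop :=
  ∃ A : Matrix (Fin Λ.card) (Fin Λ.card) ℝ,
    (∀ i j, 0 ≤ A i j) ∧
    A.charpoly = (Λ.map fun x : ℝ => X - C x).prod ∧
    (∀ i, ∑ j, A i j = r)

def Good (Λ : Multiset ℝ) : Prop :=
  ∃ a : ℝ, a ∈ Λ ∧ (∀ b ∈ Λ, |b| ≤ a) ∧ GoodW Λ a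

lemma goodW_of_matrix {ι : Type} [Fintype ι] [DecidableEq ι] (Λ : Multiset ℝ) (r : ℝ)
    (A : Matrix ι ι ℝ) (hcard : Fintype.card ι = Λ.card)
    (h1 : ∀ i j, 0 ≤ A i j) (h2 : A.charpoly = (Λ.map fun x : ℝ => X - C x).prod)
    (h3 : ∀ i, ∑ j, A i j = r) : GoodW Λ r := by
  have e := Fintype.equivFinOfCardEq hcard
  refine ⟨Matrix.reindex e e A, fun i j => h1 _ _, ?_, fun i => ?_⟩
  · rw [Matrix.charpoly_reindex]; exact h2
  · have : ∀ j, (Matrix.reindex e e A) i j = A (e.symm i) (e.symm j) := fun j => rfl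
    simp only [this]
    rw [Equiv.sum_comp e.symm (A (e.symm i))]
    exact h3 _

lemma Good.goodW_top {Λ : Multiset ℝ} {x : ℝ} (h : Good Λ)
    (hx : ∀ b ∈ Λ, b ≤ x) (hxm : x ∈ Λ) : GoodW Λ x := by
  obtain ⟨a, ha, hdom, hA⟩ := h
  have hax : a = x :=
    le_antisymm (hx a ha) (le_trans (le_abs_self x) (hdom x hxm))
  rwa [hax] at hA

lemma good_zero : Good ({0} : Multiset ℝ) := by
  refine ⟨0, by simp, by simp, ?_⟩
  refine ⟨0, fun i j => le_refl 0, ?_, fun i => by simp⟩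
  have : (({0} : Multiset ℝ).map fun x : ℝ => X - C x).prod = X - C 0 := by
    simp
  rw [this]
  have h1 : Multiset.card ({0} : Multiset ℝ) = 1 := rfl
  rw [Matrix.charpoly]
  erw [Matrix.det_fin_one, charmatrix_apply_eq]
  simp
  rfl


lemma cons_card_pos (a : ℝ) (s : Multiset ℝ) : 0 < Multiset.card (a ::ₘ s) := by
  rw [Multiset.card_cons]; positivity

lemma ones_eigen {n : ℕ} (A : Matrix (Fin n) (Fin n) ℝ) (r : ℝ)
    (h3 : ∀ i, ∑ j, A i j = r) :
    A *ᵥ (fun _ => (1 : ℝ)) = r • (fun _ => (1 : ℝ)) := by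
  ext i
  simp [Matrix.mulVec, dotProduct, h3 i]

lemma good_ruleB {a ε : ℝ} {s : Multiset ℝ}
    (hdom : ∀ b ∈ a ::ₘ s, |b| ≤ a) (hε : 0 < ε) (h : Good (a ::ₘ s)) :
    Good ((a + ε) ::ₘ s) := by
  have ha0 : 0 ≤ a := le_trans (abs_nonneg a) (hdom a (Multiset.mem_cons_self a s))
  obtain ⟨A, h1, h2, h3⟩ := h.goodW_top
    (fun b hb => le_trans (le_abs_self b) (hdom b hb)) (Multiset.mem_cons_self a s)
  have hpos : 0 < Multiset.card (a ::ₘ s) := cons_card_pos a s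
  set c : Fin (Multiset.card (a ::ₘ s)) → ℝ := Pi.single ⟨0, hpos⟩ ε with hc
  have hc0 : ∀ j, 0 ≤ c j := by
    intro j
    rw [hc, Pi.single_apply]
    split
    · exact le_of_lt hε
    · exact le_refl 0
  have hcsum : ∑ j, c j = ε := by simp [hc]
  have hv := ones_eigen A a h3
  have hdot : c ⬝ᵥ (fun _ => (1 : ℝ)) = ε := by
    rw [dotProduct]
    simpa using hcsum
  have hkey := key1 A (fun _ => (1 : ℝ)) c a hv
  rw [hdot] at hkey
  have hP : A.charpoly = (X - C a) * ((s.map fun x : ℝ => X - C x).prod) := by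
    rw [h2, Multiset.map_cons, Multiset.prod_cons]
  have hch : (A + vecMulVec (fun _ => (1 : ℝ)) c).charpoly =
      (((a + ε) ::ₘ s).map fun x : ℝ => X - C x).prod := by
    have hne : (X - C a : ℝ[X]) ≠ 0 := Polynomial.X_sub_C_ne_zero _
    apply mul_right_cancel₀ hne
    rw [hkey, hP, Multiset.map_cons, Multiset.prod_cons]
    ring
  refine ⟨a + ε, Multiset.mem_cons_self _ _, ?_, ?_⟩
  · intro b hb
    rcases Multiset.mem_cons.mp hb with hb | hb
    · subst hb; rw [abs_of_nonneg (by linarith)]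
    · exact le_trans (hdom b (Multiset.mem_cons_of_mem hb)) (by linarith)
  · apply goodW_of_matrix _ _ (A + vecMulVec (fun _ => (1 : ℝ)) c)
    · simp
    · intro i j
      simp only [Matrix.add_apply, vecMulVec_apply, one_mul]
      linarith [h1 i j, hc0 j]
    · exact hch
    · intro i
      simp only [Matrix.add_apply, vecMulVec_apply, Finset.sum_add_distrib, one_mul]
      rw [h3 i, hcsum]

lemma ruleC_core {a b ε η : ℝ} {s : Multiset ℝ}
    (hdom : ∀ x ∈ a ::ₘ b ::ₘ s, |x| ≤ a) (hε : 0 < ε) (hηε : |η| = ε)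
    (A : Matrix (Fin (Multiset.card (a ::ₘ b ::ₘ s)))
      (Fin (Multiset.card (a ::ₘ b ::ₘ s))) ℝ)
    (u c d : Fin (Multiset.card (a ::ₘ b ::ₘ s)) → ℝ)
    (h1 : ∀ i j, 0 ≤ A i j)
    (h2 : A.charpoly = ((a ::ₘ b ::ₘ s).map fun x : ℝ => X - C x).prod)
    (h3 : ∀ i, ∑ j, A i j = a)
    (hu : A *ᵥ u = b • u)
    (hcsum : ∑ j, c j = ε) (hdsum : ∑ j, d j = 0) (hdu : d ⬝ᵥ u = η)
    (hcd : ∀ i j, 0 ≤ c j + u i * d j) :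
    Good ((a + ε) ::ₘ (b + η) ::ₘ s) := by
  have ha0 : 0 ≤ a := le_trans (abs_nonneg a) (hdom a (Multiset.mem_cons_self _ _))
  have hb : |b| ≤ a := hdom b (Multiset.mem_cons_of_mem (Multiset.mem_cons_self _ _))
  have hv := ones_eigen A a h3
  set A' := A + vecMulVec (fun _ => (1:ℝ)) c + vecMulVec u d with hA'
  have hcv : c ⬝ᵥ (fun _ => (1:ℝ)) = ε := by
    rw [dotProduct]; simpa using hcsum
  have hdv : d ⬝ᵥ (fun _ => (1:ℝ)) = 0 := by
    rw [dotProduct]; simpa using hdsum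
  have hkey := key2 A (fun _ => (1:ℝ)) u c d a b hv hu hdv
  rw [hcv, hdu] at hkey
  have hP : A.charpoly = (X - C a) * ((X - C b) *
      ((s.map fun x : ℝ => X - C x).prod)) := by
    rw [h2, Multiset.map_cons, Multiset.map_cons, Multiset.prod_cons, Multiset.prod_cons]
  have hch : A'.charpoly = (((a + ε) ::ₘ (b + η) ::ₘ s).map fun x : ℝ => X - C x).prod := by
    have hne : ((X - C a) * (X - C b) : ℝ[X]) ≠ 0 :=
      mul_ne_zero (Polynomial.X_sub_C_ne_zero _) (Polynomial.X_sub_C_ne_zero _)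
    apply mul_right_cancel₀ hne
    calc A'.charpoly * ((X - C a) * (X - C b))
        = A.charpoly * ((X - C (a + ε)) * (X - C (b + η))) := hkey
      _ = (((a + ε) ::ₘ (b + η) ::ₘ s).map fun x : ℝ => X - C x).prod
            * ((X - C a) * (X - C b)) := by
          rw [hP, Multiset.map_cons, Multiset.map_cons, Multiset.prod_cons,
            Multiset.prod_cons]
          ring
  refine ⟨a + ε, Multiset.mem_cons_self _ _, ?_, ?_⟩
  · intro x hx
    rcases Multiset.mem_cons.mp hx with hx | hx
    · subst hx; rw [abs_of_nonneg (by linarith)]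
    rcases Multiset.mem_cons.mp hx with hx | hx
    · subst hx
      calc |b + η| ≤ |b| + |η| := abs_add_le _ _
        _ ≤ a + ε := by rw [hηε]; linarith
    · exact le_trans (hdom x (Multiset.mem_cons_of_mem (Multiset.mem_cons_of_mem hx)))
        (by linarith)
  · apply goodW_of_matrix _ _ A'
    · simp
    · intro i j
      have := hcd i j
      simp only [hA', Matrix.add_apply, vecMulVec_apply, one_mul]
      linarith [h1 i j]
    · exact hch
    · intro i
      simp only [hA', Matrix.add_apply, vecMulVec_apply, Finset.sum_add_distrib, one_mul]
      rw [h3 i, hcsum, ← Finset.mul_sum, hdsum, mul_zero, add_zero]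

lemma good_ruleC {a b ε η : ℝ} {s : Multiset ℝ}
    (hdom : ∀ x ∈ a ::ₘ b ::ₘ s, |x| ≤ a) (hε : 0 < ε) (hba : b < a)
    (hη : η = ε ∨ η = -ε) (h : Good (a ::ₘ b ::ₘ s)) :
    Good ((a + ε) ::ₘ (b + η) ::ₘ s) := by
  obtain ⟨A, h1, h2, h3⟩ := h.goodW_top
    (fun x hx => le_trans (le_abs_self x) (hdom x hx)) (Multiset.mem_cons_self _ _)
  have hv := ones_eigen A a h3
  -- eigenvector for b
  have hbroot : Polynomial.eval b A.charpoly = 0 := by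
    rw [h2, evalProd]
    apply Multiset.prod_eq_zero
    exact Multiset.mem_map.mpr ⟨b,
      Multiset.mem_cons_of_mem (Multiset.mem_cons_self _ _), by ring⟩
  have hdet : (A - b • 1).det = 0 := by
    have h0 : (b • (1 : Matrix (Fin (Multiset.card (a ::ₘ b ::ₘ s)))
        (Fin (Multiset.card (a ::ₘ b ::ₘ s))) ℝ) - A).det = 0 := by
      rw [← eval_charpoly'_s19]; exact hbroot
    have hswap : A - b • 1 = -(b • (1 : Matrix (Fin (Multiset.card (a ::ₘ b ::ₘ s)))
        (Fin (Multiset.card (a ::ₘ b ::ₘ s))) ℝ) - A) := by abel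
    rw [hswap, Matrix.det_neg, h0, mul_zero]
  obtain ⟨u, hu0, huA⟩ := Matrix.exists_mulVec_eq_zero_iff.mpr hdet
  have hu : A *ᵥ u = b • u := by
    have hx : (A - b • 1) *ᵥ u = A *ᵥ u - b • u := by
      rw [Matrix.sub_mulVec, Matrix.smul_mulVec, Matrix.one_mulVec]
    rw [hx] at huA
    exact sub_eq_zero.mp huA
  -- max and min of u
  have hnind : (Finset.univ : Finset (Fin (Multiset.card (a ::ₘ b ::ₘ s)))).Nonempty :=
    ⟨⟨0, cons_card_pos _ _⟩, Finset.mem_univ _⟩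
  obtain ⟨p, _, hp⟩ := Finset.exists_max_image Finset.univ u hnind
  obtain ⟨q, _, hq⟩ := Finset.exists_min_image Finset.univ u hnind
  have hqp : u q < u p := by
    rcases lt_or_ge (u q) (u p) with h' | h'
    · exact h'
    exfalso
    have hconst : ∀ i, u i = u p := fun i =>
      le_antisymm (hp i (Finset.mem_univ i)) (le_trans h' (hq i (Finset.mem_univ i)))
    have hupne : u p ≠ 0 := by
      intro h0
      apply hu0
      ext i; rw [hconst i, h0]; rfl
    have hcontr : b * u p = a * u p := by
      have e1 : (A *ᵥ u) p = b * u p := by rw [hu]; simp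
      have e2 : (A *ᵥ u) p = a * u p := by
        simp only [Matrix.mulVec, dotProduct]
        calc ∑ j, A p j * u j = ∑ j, A p j * u p := by
              apply Finset.sum_congr rfl
              intro j _
              rw [hconst j]
          _ = (∑ j, A p j) * u p := by rw [Finset.sum_mul]
          _ = a * u p := by rw [h3 p]
      rw [← e1, e2]
    have := mul_right_cancel₀ hupne hcontr
    linarith
  have hpq : p ≠ q := by
    intro h'; rw [h'] at hqp; exact lt_irrefl _ hqp
  set κ := ε / (u p - u q) with hκ
  have hκ0 : 0 < κ := div_pos hε (by linarith)
  have hκc : κ * (u p - u q) = ε := by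
    rw [hκ, div_mul_cancel₀ _ (by linarith : u p - u q ≠ 0)]
  have hsingle : ∀ (x y : ℝ) (j : Fin (Multiset.card (a ::ₘ b ::ₘ s))),
      ((Pi.single p x + Pi.single q y : Fin (Multiset.card (a ::ₘ b ::ₘ s)) → ℝ)) j =
        if j = p then x else if j = q then y else 0 := by
    intro x y j
    rw [Pi.add_apply]
    by_cases hjp : j = p
    · subst hjp
      rw [Pi.single_eq_same, Pi.single_eq_of_ne hpq, if_pos rfl, add_zero]
    by_cases hjq : j = q
    · subst hjq
      rw [Pi.single_eq_same, Pi.single_eq_of_ne (by exact hjp), if_neg hjp, if_pos rfl,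
        zero_add]
    · rw [Pi.single_eq_of_ne (by exact hjp), Pi.single_eq_of_ne (by exact hjq),
        if_neg hjp, if_neg hjq, add_zero]
  have hsum2 : ∀ x y : ℝ,
      ∑ j, ((Pi.single p x + Pi.single q y : Fin (Multiset.card (a ::ₘ b ::ₘ s)) → ℝ)) j
        = x + y := by
    intro x y
    simp only [Pi.add_apply, Finset.sum_add_distrib]
    rw [Finset.sum_pi_single', Finset.sum_pi_single']
    simp
  have hdot2 : ∀ x y : ℝ,
      ((Pi.single p x + Pi.single q y : Fin (Multiset.card (a ::ₘ b ::ₘ s)) → ℝ)) ⬝ᵥ u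
        = x * u p + y * u q := by
    intro x y
    rw [add_dotProduct, single_dotProduct, single_dotProduct]
  rcases hη with hη | hη
  · -- plus case
    refine ruleC_core hdom hε (by rw [hη, abs_of_pos hε]) A u
      (κ • (Pi.single p (-(u q)) + Pi.single q (u p)))
      (κ • (Pi.single p 1 + Pi.single q (-1)))
      h1 h2 h3 hu ?_ ?_ ?_ ?_
    · simp only [Pi.smul_apply, smul_eq_mul, ← Finset.mul_sum]
      rw [hsum2, ← hκc]; ring
    · simp only [Pi.smul_apply, smul_eq_mul, ← Finset.mul_sum]
      rw [hsum2]; ring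
    · rw [smul_dotProduct, hdot2, smul_eq_mul, hη, ← hκc]; ring
    · intro i j
      have hqi := hq i (Finset.mem_univ i)
      have hpi := hp i (Finset.mem_univ i)
      rw [Pi.smul_apply, Pi.smul_apply, hsingle, hsingle, smul_eq_mul, smul_eq_mul]
      by_cases hjp : j = p
      · rw [if_pos hjp, if_pos hjp]
        nlinarith
      by_cases hjq : j = q
      · rw [if_neg hjp, if_neg hjp, if_pos hjq, if_pos hjq]
        nlinarith
      · rw [if_neg hjp, if_neg hjp, if_neg hjq, if_neg hjq]
        simp
  · -- minus case
    refine ruleC_core hdom hε (by rw [hη, abs_of_neg (by linarith), neg_neg]) A u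
      (κ • (Pi.single p (u p) + Pi.single q (-(u q))))
      (κ • (Pi.single p (-1) + Pi.single q 1))
      h1 h2 h3 hu ?_ ?_ ?_ ?_
    · simp only [Pi.smul_apply, smul_eq_mul, ← Finset.mul_sum]
      rw [hsum2, ← hκc]; ring
    · simp only [Pi.smul_apply, smul_eq_mul, ← Finset.mul_sum]
      rw [hsum2]; ring
    · rw [smul_dotProduct, hdot2, smul_eq_mul, hη, ← hκc]; ring
    · intro i j
      have hqi := hq i (Finset.mem_univ i)
      have hpi := hp i (Finset.mem_univ i)
      rw [Pi.smul_apply, Pi.smul_apply, hsingle, hsingle, smul_eq_mul, smul_eq_mul]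
      by_cases hjp : j = p
      · rw [if_pos hjp, if_pos hjp]
        nlinarith
      by_cases hjq : j = q
      · rw [if_neg hjp, if_neg hjp, if_pos hjq, if_pos hjq]
        nlinarith
      · rw [if_neg hjp, if_neg hjp, if_neg hjq, if_neg hjq]
        simp

lemma good_join_le {Λ₁ Λ₂ : Multiset ℝ} {a₁ a₂ : ℝ}
    (m₁ : a₁ ∈ Λ₁) (d₁ : ∀ b ∈ Λ₁, |b| ≤ a₁) (g₁ : GoodW Λ₁ a₁)
    (m₂ : a₂ ∈ Λ₂) (d₂ : ∀ b ∈ Λ₂, |b| ≤ a₂) (g₂ : GoodW Λ₂ a₂)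
    (hle : a₂ ≤ a₁) : Good (Λ₁ + Λ₂) := by
  obtain ⟨A₁, p1, p2, p3⟩ := g₁
  obtain ⟨A₂, q1, q2, q3⟩ := g₂
  have hn₁ : 0 < Multiset.card Λ₁ :=
    Multiset.card_pos.mpr (fun h => by simp [h] at m₁)
  have hn₁' : ((Multiset.card Λ₁ : ℕ) : ℝ) ≠ 0 := by
    have := hn₁
    positivity
  set E : Matrix (Fin (Multiset.card Λ₂)) (Fin (Multiset.card Λ₁)) ℝ :=
    fun _ _ => (a₁ - a₂) / (Multiset.card Λ₁ : ℝ) with hE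
  refine ⟨a₁, Multiset.mem_add.mpr (Or.inl m₁), ?_, ?_⟩
  · intro b hb
    rcases Multiset.mem_add.mp hb with hb | hb
    · exact d₁ b hb
    · exact le_trans (d₂ b hb) hle
  · apply goodW_of_matrix _ _ (Matrix.fromBlocks A₁ 0 E A₂)
    · simp [Multiset.card_add]
    · rintro (i | i) (j | j)
      · exact p1 i j
      · simp
      · simp only [Matrix.fromBlocks_apply₂₁, hE]
        have h' : 0 ≤ a₁ - a₂ := sub_nonneg.mpr hle
        exact div_nonneg h' (Nat.cast_nonneg _)
      · exact q1 i j
    · rw [Matrix.charpoly_fromBlocks_zero₁₂, p2, q2, Multiset.map_add, Multiset.prod_add]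
    · rintro (i | i)
      · rw [Fintype.sum_sum_type]
        simp only [Matrix.fromBlocks_apply₁₁, Matrix.fromBlocks_apply₁₂]
        rw [p3 i]
        simp
      · rw [Fintype.sum_sum_type]
        simp only [Matrix.fromBlocks_apply₂₁, Matrix.fromBlocks_apply₂₂]
        rw [q3 i, hE]
        simp only [Finset.sum_const, Finset.card_univ, Fintype.card_fin, nsmul_eq_mul]
        rw [mul_div_cancel₀ _ hn₁']
        ring

lemma good_join {Λ₁ Λ₂ : Multiset ℝ} (h₁ : Good Λ₁) (h₂ : Good Λ₂) :
    Good (Λ₁ + Λ₂) := by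
  obtain ⟨a₁, m₁, d₁, g₁⟩ := h₁
  obtain ⟨a₂, m₂, d₂, g₂⟩ := h₂
  rcases le_total a₂ a₁ with hle | hle
  · exact good_join_le m₁ d₁ g₁ m₂ d₂ g₂ hle
  · rw [add_comm]
    exact good_join_le m₂ d₂ g₂ m₁ d₁ g₁ hle

lemma exists_matrix_of_goodW {Λ : Multiset ℝ} {r : ℝ} (h : GoodW Λ r) (N : ℕ)
    (hN : Multiset.card Λ = N) :
    ∃ A : Matrix (Fin N) (Fin N) ℝ, (∀ i j, 0 ≤ A i j) ∧
      A.charpoly = (Λ.map fun x : ℝ => X - C x).prod ∧ (∀ i, ∑ j, A i j = r) := by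
  subst hN; exact h

lemma good_eqC {a ε η : ℝ} {s : Multiset ℝ}
    (hdom : ∀ x ∈ a ::ₘ a ::ₘ s, |x| ≤ a) (hε : 0 < ε)
    (hη : η = ε ∨ η = -ε) (h : Good (a ::ₘ a ::ₘ s)) :
    Good ((a + ε) ::ₘ (a + η) ::ₘ s) := by
  have ha0 : 0 ≤ a := le_trans (abs_nonneg a) (hdom a (Multiset.mem_cons_self _ _))
  have hηε : |η| = ε := by
    rcases hη with h' | h'
    · rw [h', abs_of_pos hε]
    · rw [h', abs_of_neg (by linarith), neg_neg]
  have hηle : η ≤ ε := le_trans (le_abs_self η) (le_of_eq hηε)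
  have hηge : -ε ≤ η := by
    have := neg_abs_le η
    rw [hηε] at this
    exact this
  set N := Multiset.card ((a + ε) ::ₘ (a + η) ::ₘ s) with hN
  have hstep : ∀ k : ℕ, ∃ A : Matrix (Fin N) (Fin N) ℝ, (∀ i j, 0 ≤ A i j) ∧
      A.charpoly = (((a + (1/(k+1) : ℝ) + ε) ::ₘ (a + η) ::ₘ s).map
        fun x : ℝ => X - C x).prod ∧
      (∀ i, ∑ j, A i j = a + (1/(k+1) : ℝ) + ε) := by
    intro k
    set δ : ℝ := 1/(k+1) with hδ
    have hδ0 : 0 < δ := by positivity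
    have h1 : Good ((a + δ) ::ₘ a ::ₘ s) := good_ruleB hdom hδ0 h
    have hdom' : ∀ x ∈ (a + δ) ::ₘ a ::ₘ s, |x| ≤ a + δ := by
      intro x hx
      rcases Multiset.mem_cons.mp hx with hx | hx
      · subst hx; rw [abs_of_nonneg (by linarith)]
      · have : |x| ≤ a := by
          rcases Multiset.mem_cons.mp hx with hx' | hx'
          · subst hx'; exact hdom _ (Multiset.mem_cons_self _ _)
          · exact hdom _ (Multiset.mem_cons_of_mem (Multiset.mem_cons_of_mem hx'))
        linarith
    have h2 : Good ((a + δ + ε) ::ₘ (a + η) ::ₘ s) :=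
      good_ruleC hdom' hε (by linarith) hη h1
    have hW : GoodW ((a + δ + ε) ::ₘ (a + η) ::ₘ s) (a + δ + ε) := by
      apply h2.goodW_top
      · intro x hx
        rcases Multiset.mem_cons.mp hx with hx | hx
        · subst hx; exact le_refl _
        rcases Multiset.mem_cons.mp hx with hx | hx
        · subst hx; linarith
        · have := hdom x (Multiset.mem_cons_of_mem (Multiset.mem_cons_of_mem hx))
          have := le_abs_self x
          linarith
      · exact Multiset.mem_cons_self _ _
    exact exists_matrix_of_goodW hW N (by simp [hN])
  choose A hA1 hA2 hA3 using hstep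
  set R : ℝ := a + ε + 1 with hR
  have hmem : ∀ k : ℕ, (fun i j => A k i j) ∈ Set.pi Set.univ
      (fun _ : Fin N => Set.pi Set.univ (fun _ : Fin N => Set.Icc (0:ℝ) R)) := by
    intro k
    rw [Set.mem_univ_pi]
    intro i
    rw [Set.mem_univ_pi]
    intro j
    refine ⟨hA1 k i j, ?_⟩
    have hbound : A k i j ≤ a + 1/(k+1) + ε := by
      rw [← hA3 k i]
      exact Finset.single_le_sum (fun j' _ => hA1 k i j') (Finset.mem_univ j)
    have hk1 : (1:ℝ)/(k+1) ≤ 1 := by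
      rw [div_le_one (by positivity)]
      have : (0:ℝ) ≤ (k:ℝ) := Nat.cast_nonneg k
      linarith
    rw [hR]
    linarith
  have hcomp : IsCompact (Set.pi Set.univ
      (fun _ : Fin N => Set.pi Set.univ (fun _ : Fin N => Set.Icc (0:ℝ) R))) :=
    isCompact_univ_pi (fun _ => isCompact_univ_pi (fun _ => isCompact_Icc))
  obtain ⟨L, _, φ, hφ, hφt⟩ := hcomp.tendsto_subseq hmem
  have hent : ∀ i j, Filter.Tendsto (fun k => A (φ k) i j)
      Filter.atTop (nhds (L i j)) := by
    intro i j
    exact (((continuous_apply j).comp (continuous_apply i)).tendsto L).comp hφt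
  have hδt : Filter.Tendsto (fun k => (1:ℝ)/((φ k : ℝ)+1)) Filter.atTop (nhds 0) :=
    tendsto_one_div_add_atTop_nhds_zero_nat.comp hφ.tendsto_atTop
  set B : Matrix (Fin N) (Fin N) ℝ := Matrix.of L with hB
  have hBr : ∀ i, ∑ j, B i j = a + ε := by
    intro i
    have hs1 : Filter.Tendsto (fun k => ∑ j, A (φ k) i j) Filter.atTop
        (nhds (∑ j, B i j)) := tendsto_finset_sum _ (fun j _ => hent i j)
    have hs2 : Filter.Tendsto (fun k => ∑ j, A (φ k) i j) Filter.atTop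
        (nhds (a + ε)) := by
      have he : (fun k => ∑ j, A (φ k) i j) = fun k => a + 1/((φ k : ℝ)+1) + ε := by
        funext k
        rw [hA3 (φ k) i]
      rw [he]
      have := (tendsto_const_nhds (x := a) (f := Filter.atTop (α := ℕ))).add hδt
      have := this.add (tendsto_const_nhds (x := ε) (f := Filter.atTop (α := ℕ)))
      simpa using this
    exact tendsto_nhds_unique hs1 hs2
  have hBc : B.charpoly = (((a + ε) ::ₘ (a + η) ::ₘ s).map fun x : ℝ => X - C x).prod := by
    apply Polynomial.funext
    intro x
    rw [eval_charpoly'_s19, evalProd]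
    have hcont : Continuous (fun f : Fin N → Fin N → ℝ =>
        ((x • (1 : Matrix (Fin N) (Fin N) ℝ)) - Matrix.of f).det) := by
      apply Continuous.matrix_det
      exact continuous_const.sub (by exact continuous_id)
    have hd1 : Filter.Tendsto
        (fun k => ((x • (1 : Matrix (Fin N) (Fin N) ℝ)) - A (φ k)).det)
        Filter.atTop (nhds (((x • (1 : Matrix (Fin N) (Fin N) ℝ)) - B).det)) :=
      (hcont.tendsto L).comp hφt
    have hev : ∀ k, ((x • (1 : Matrix (Fin N) (Fin N) ℝ)) - A (φ k)).det =
        (x - (a + 1/((φ k : ℝ)+1) + ε)) *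
          ((x - (a + η)) * (s.map fun t : ℝ => x - t).prod) := by
      intro k
      rw [← eval_charpoly'_s19, hA2 (φ k), evalProd, Multiset.map_cons, Multiset.map_cons,
        Multiset.prod_cons, Multiset.prod_cons]
    have hd2 : Filter.Tendsto
        (fun k => ((x • (1 : Matrix (Fin N) (Fin N) ℝ)) - A (φ k)).det)
        Filter.atTop (nhds ((x - (a + ε)) *
          ((x - (a + η)) * (s.map fun t : ℝ => x - t).prod))) := by
      simp only [hev]
      apply Filter.Tendsto.mul _ tendsto_const_nhds
      have h1 : Filter.Tendsto (fun k => x - (a + 1/((φ k : ℝ)+1) + ε))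
          Filter.atTop (nhds (x - (a + 0 + ε))) :=
        tendsto_const_nhds.sub ((tendsto_const_nhds.add hδt).add tendsto_const_nhds)
      simpa using h1
    have := tendsto_nhds_unique hd1 hd2
    rw [this, Multiset.map_cons, Multiset.map_cons, Multiset.prod_cons, Multiset.prod_cons]
  refine ⟨a + ε, Multiset.mem_cons_self _ _, ?_, ?_⟩
  · intro x hx
    rcases Multiset.mem_cons.mp hx with hx | hx
    · subst hx; rw [abs_of_nonneg (by linarith)]
    rcases Multiset.mem_cons.mp hx with hx | hx
    · subst hx
      rw [abs_le]
      constructor <;> linarith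
    · have := hdom x (Multiset.mem_cons_of_mem (Multiset.mem_cons_of_mem hx))
      linarith
  · apply goodW_of_matrix _ _ B
    · simp [hN]
    · intro i j
      exact ge_of_tendsto' (hent i j) (fun k => hA1 (φ k) i j)
    · exact hBc
    · exact hBr
lemma step_preserves {c c' : Multiset (Multiset ℝ)} (hstep : StepR c c')
    (h : ∀ Λ ∈ c, Good Λ) : ∀ Λ ∈ c', Good Λ := by
  cases hstep with
  | join A B C =>
    intro Λ hΛ
    rcases Multiset.mem_cons.mp hΛ with rfl | hΛ
    · exact good_join (h A (Multiset.mem_cons_self _ _))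
        (h B (Multiset.mem_cons_of_mem (Multiset.mem_cons_self _ _)))
    · exact h Λ (Multiset.mem_cons_of_mem (Multiset.mem_cons_of_mem hΛ))
  | ruleB a ε s C hdom hε =>
    intro Λ hΛ
    rcases Multiset.mem_cons.mp hΛ with rfl | hΛ
    · exact good_ruleB hdom hε (h _ (Multiset.mem_cons_self _ _))
    · exact h Λ (Multiset.mem_cons_of_mem hΛ)
  | ruleCplus a b ε s C hdom hε =>
    intro Λ hΛ
    rcases Multiset.mem_cons.mp hΛ with rfl | hΛ
    · have hg := h _ (Multiset.mem_cons_self _ _)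
      have hb : b ≤ a := le_trans (le_abs_self b)
        (hdom b (Multiset.mem_cons_of_mem (Multiset.mem_cons_self _ _)))
      rcases lt_or_eq_of_le hb with hba | hba
      · exact good_ruleC hdom hε hba (Or.inl rfl) hg
      · subst hba
        exact good_eqC hdom hε (Or.inl rfl) hg
    · exact h Λ (Multiset.mem_cons_of_mem hΛ)
  | ruleCminus a b ε s C hdom hε =>
    intro Λ hΛ
    rcases Multiset.mem_cons.mp hΛ with rfl | hΛ
    · have hg := h _ (Multiset.mem_cons_self _ _)
      have hb : b ≤ a := le_trans (le_abs_self b)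
        (hdom b (Multiset.mem_cons_of_mem (Multiset.mem_cons_self _ _)))
      have hsub : b - ε = b + (-ε) := by ring
      rw [hsub]
      rcases lt_or_eq_of_le hb with hba | hba
      · exact good_ruleC hdom hε hba (Or.inr rfl) hg
      · subst hba
        exact good_eqC hdom hε (Or.inr rfl) hg
    · exact h Λ (Multiset.mem_cons_of_mem hΛ)

/-- If a finite multiset of real numbers is C-realizable, then it is realizable
by a nonnegative matrix. -/
theorem realizable_of_CRealizable (Λ : Multiset ℝ) (h : CRealizable Λ) :
    Realizable (Λ.map fun x : ℝ => (x : ℂ)) := by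
  obtain ⟨n, hr⟩ := h
  have hall : ∀ c, Relation.ReflTransGen StepR (Multiset.replicate n ({0} : Multiset ℝ)) c →
      ∀ Λ' ∈ c, Good Λ' := by
    intro c hc
    induction hc with
    | refl =>
      intro Λ' hΛ'
      rw [Multiset.eq_of_mem_replicate hΛ']
      exact good_zero
    | tail h1 h2 ih =>
      exact step_preserves h2 ih
  have hG : Good Λ := hall _ hr Λ (Multiset.mem_singleton_self Λ)
  obtain ⟨a, ham, hdom, A, h1, h2, h3⟩ := hG
  have hcard : Multiset.card Λ = Multiset.card (Λ.map fun x : ℝ => (x : ℂ)) :=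
    (Multiset.card_map _ _).symm
  set e := finCongr hcard with he
  refine ⟨Matrix.reindex e e A, fun i j => h1 _ _, ?_⟩
  have hmapre : (Matrix.reindex e e A).map (fun x : ℝ => (x : ℂ)) =
      Matrix.reindex e e (A.map fun x : ℝ => (x : ℂ)) := rfl
  rw [hmapre, Matrix.charpoly_reindex]
  have hcp : ((A.map fun x : ℝ => (x : ℂ))).charpoly =
      A.charpoly.map (algebraMap ℝ ℂ) := by
    have hmm : (A.map fun x : ℝ => (x : ℂ)) = A.map (algebraMap ℝ ℂ) := by
      ext i j; simp
    rw [hmm, Matrix.charpoly_map]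
  rw [hcp, h2]
  have hprod := map_multiset_prod (Polynomial.mapRingHom (algebraMap ℝ ℂ))
    (Λ.map fun x : ℝ => X - C x)
  simp only [Polynomial.coe_mapRingHom] at hprod
  rw [hprod, Multiset.map_map, Multiset.map_map]
  congr 1
  apply Multiset.map_congr rfl
  intro t _
  simp


end CPaper
end
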